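/- arXiv:0907.1993 — 3 statements merged into one kernel-verified Lean document; each statement's English description precedes it below -/
import Mathlib

section
/- If a module M is (n,m)-SG-projective, then M is (nk, m)-SG-projective for every integer k ≥ 1. In particular, every (1,m)-SG-projective module is (n,m)-SG-projective for every n ≥ 1. -/
/- Formalization preliminaries: exact sequences of modules, projective/flat/Gorenstein
projective dimensions, (n,m)-strongly Gorenstein projective modules. -/

open CategoryTheory

universe u

variable (R : Type u) [Ring R]

/-- `IsExactSeq d n` says that the finite complex
`0 → X (n+1) → X n → ⋯ → X 1 → X 0 → 0` (with maps `d i : X (i+1) ⟶ X i` for `i ≤ n`)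
is exact everywhere: `d n` is injective, `d 0` is surjective, and it is exact at the
interior terms. -/
def IsExactSeq {X : ℕ → ModuleCat.{u} R} (d : ∀ i, X (i + 1) ⟶ X i) (n : ℕ) : Prop :=
  Function.Injective (d n) ∧ Function.Surjective (d 0) ∧
    ∀ i < n, Function.Exact (d (i + 1)) (d i)

/-- The finite exact sequence `0 → X (n+1) → ⋯ → X 0 → 0` remains exact after applying
`Hom(-, Q)` for every projective module `Q`. -/
def IsHomProjExactSeq {X : ℕ → ModuleCat.{u} R} (d : ∀ i, X (i + 1) ⟶ X i) (n : ℕ) : Prop :=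
  ∀ Q : ModuleCat.{u} R, Projective Q →
    Function.Injective (fun g : X 0 ⟶ Q => d 0 ≫ g) ∧
    Function.Surjective (fun g : X n ⟶ Q => d n ≫ g) ∧
    ∀ i < n, Function.Exact (fun g : X i ⟶ Q => d i ≫ g)
      (fun g : X (i + 1) ⟶ Q => d (i + 1) ≫ g)

/-- `M` has projective dimension at most `m`: there is an exact sequence
`0 → P_m → ⋯ → P_0 → M → 0` with all `P_i` projective. -/
def HasPdLE (M : ModuleCat.{u} R) (m : ℕ) : Prop :=
  ∃ (X : ℕ → ModuleCat.{u} R) (d : ∀ i, X (i + 1) ⟶ X i),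
    Nonempty (X 0 ≅ M) ∧ (∀ i, 1 ≤ i → i ≤ m + 1 → Projective (X i)) ∧ IsExactSeq R d m

/-- `M` is a flat module, expressed via the equational criterion of flatness
(valid over any associative ring): whenever `∑ aᵢ • xᵢ = 0` with `aᵢ ∈ R`, `xᵢ ∈ M`,
there are `yⱼ ∈ M` and `bᵢⱼ ∈ R` with `xᵢ = ∑ⱼ bᵢⱼ • yⱼ` and `∑ᵢ aᵢ * bᵢⱼ = 0`. -/
def IsFlatModule (M : ModuleCat.{u} R) : Prop :=
  ∀ (k : ℕ) (a : Fin k → R) (x : Fin k → M), (∑ i, a i • x i) = 0 →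
    ∃ (l : ℕ) (b : Fin k → Fin l → R) (y : Fin l → M),
      (∀ i, x i = ∑ j, b i j • y j) ∧ ∀ j, (∑ i, a i * b i j) = 0

/-- `M` has flat dimension at most `m`: there is an exact sequence
`0 → F_m → ⋯ → F_0 → M → 0` with all `F_i` flat. -/
def HasFdLE (M : ModuleCat.{u} R) (m : ℕ) : Prop :=
  ∃ (X : ℕ → ModuleCat.{u} R) (d : ∀ i, X (i + 1) ⟶ X i),
    Nonempty (X 0 ≅ M) ∧ (∀ i, 1 ≤ i → i ≤ m + 1 → IsFlatModule R (X i)) ∧ IsExactSeq R d m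

/-- A complete projective resolution of `M`: an exact sequence of projective modules
`⋯ → P 1 → P 0 → P (-1) → ⋯` which stays exact after applying `Hom(-, Q)` for every
projective `Q`, together with an isomorphism `M ≅ Im (P 0 → P (-1))`. -/
structure CompleteProjRes (M : ModuleCat.{u} R) where
  P : ℤ → ModuleCat.{u} R
  d : ∀ i : ℤ, P (i + 1) ⟶ P i
  projective : ∀ i, Projective (P i)
  exact : ∀ i, Function.Exact (d (i + 1)) (d i)
  homExact : ∀ Q : ModuleCat.{u} R, Projective Q → ∀ i,
    Function.Exact (fun g : P i ⟶ Q => d i ≫ g) (fun g : P (i + 1) ⟶ Q => d (i + 1) ≫ g)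
  iso : Nonempty (M ≅ ModuleCat.of R (LinearMap.range (d (-1)).hom))

/-- `M` is Gorenstein projective if it admits a complete projective resolution. -/
def IsGProjective (M : ModuleCat.{u} R) : Prop := Nonempty (CompleteProjRes R M)

/-- `M` has Gorenstein projective dimension at most `k`: there is an exact sequence
`0 → G_k → ⋯ → G_0 → M → 0` with all `G_i` Gorenstein projective. -/
def HasGpdLE (M : ModuleCat.{u} R) (k : ℕ) : Prop :=
  ∃ (X : ℕ → ModuleCat.{u} R) (d : ∀ i, X (i + 1) ⟶ X i),
    Nonempty (X 0 ≅ M) ∧ (∀ i, 1 ≤ i → i ≤ k + 1 → IsGProjective R (X i)) ∧ IsExactSeq R d k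

/-- `Gpd M = k`. -/
def HasGpdEq (M : ModuleCat.{u} R) (k : ℕ) : Prop :=
  HasGpdLE R M k ∧ ∀ j < k, ¬ HasGpdLE R M j

/-- `M` is `n`-strongly Gorenstein projective: there is an exact sequence
`0 → M → P_n → ⋯ → P_1 → M → 0` with all `P_i` projective which remains exact under
`Hom(-, Q)` for every projective `Q`. -/
def IsNSGProjective (n : ℕ) (M : ModuleCat.{u} R) : Prop :=
  ∃ (X : ℕ → ModuleCat.{u} R) (d : ∀ i, X (i + 1) ⟶ X i),
    Nonempty (X 0 ≅ M) ∧ Nonempty (X (n + 1) ≅ M) ∧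
    (∀ i, 1 ≤ i → i ≤ n → Projective (X i)) ∧
    IsExactSeq R d n ∧ IsHomProjExactSeq R d n

/-- The `Ext` group `Ext^i(M, N)` (as a `ℤ`-module). -/
noncomputable def extGroup (i : ℕ) (M N : ModuleCat.{u} R) : ModuleCat ℤ :=
  ((Ext ℤ (ModuleCat.{u} R) i).obj (Opposite.op M)).obj N

/-- `M` is `(n, m)`-strongly Gorenstein projective: there is an exact sequence
`0 → M → Q_n → ⋯ → Q_1 → M → 0` with `pd (Q_i) ≤ m` for all `i`, and
`Ext^i(M, Q) = 0` for every `i > m` and every projective `Q`. -/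
def IsSGProjective (n m : ℕ) (M : ModuleCat.{u} R) : Prop :=
  (∃ (X : ℕ → ModuleCat.{u} R) (d : ∀ i, X (i + 1) ⟶ X i),
    Nonempty (X 0 ≅ M) ∧ Nonempty (X (n + 1) ≅ M) ∧
    (∀ i, 1 ≤ i → i ≤ n → HasPdLE R (X i) m) ∧ IsExactSeq R d n) ∧
  ∀ i, m < i → ∀ Q : ModuleCat.{u} R, Projective Q → Subsingleton (extGroup R i M Q)

/-- A projective resolution `⋯ → P 1 → P 0 → M → 0` of `M`. -/
structure ProjRes (M : ModuleCat.{u} R) where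
  P : ℕ → ModuleCat.{u} R
  d : ∀ i : ℕ, P (i + 1) ⟶ P i
  π : P 0 ⟶ M
  projective : ∀ i, Projective (P i)
  surj : Function.Surjective π
  exact₀ : Function.Exact (d 0) π
  exact : ∀ i, Function.Exact (d (i + 1)) (d i)

/-- `K` is an `i`-th syzygy of `M` (for `i ≥ 1`): `K ≅ Im (P i → P (i-1))` in some
projective resolution of `M`. -/
def IsSyzygy (M : ModuleCat.{u} R) (i : ℕ) (K : ModuleCat.{u} R) : Prop :=
  ∃ res : ProjRes R M, Nonempty (K ≅ ModuleCat.of R (LinearMap.range (res.d (i - 1)).hom))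

namespace SGX
variable {R : Type u} [Ring R]

lemma iso_bij {A B : ModuleCat.{u} R} (e : A ≅ B) : Function.Bijective e.hom :=
  e.toLinearEquiv.bijective

lemma inj_comp {A B C : ModuleCat.{u} R} (f : A ⟶ B) (g : B ⟶ C)
    (hf : Function.Injective f) (hg : Function.Injective g) :
    Function.Injective ⇑(f ≫ g) := by
  intro x y h
  apply hf; apply hg; simpa using h

lemma comp_eqToHom_self {A B : ModuleCat.{u} R} (f : A ⟶ B) (p : B = B) :
    f ≫ eqToHom p = f := by
  have : p = rfl := rfl
  rw [this, eqToHom_refl, Category.comp_id]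

lemma inj_cast {A B A' B' : ModuleCat.{u} R} (hA : A' = A) (hB : B = B') (f : A ⟶ B)
    (h : Function.Injective f) : Function.Injective ⇑(eqToHom hA ≫ f ≫ eqToHom hB) := by
  subst hA; subst hB; simpa using h

lemma surj_cast {A B A' B' : ModuleCat.{u} R} (hA : A' = A) (hB : B = B') (f : A ⟶ B)
    (h : Function.Surjective f) : Function.Surjective ⇑(eqToHom hA ≫ f ≫ eqToHom hB) := by
  subst hA; subst hB; simpa using h

lemma exact_cast₂ {A B C Z₁ Z₂ Z₃ B' : ModuleCat.{u} R}
    (f : A ⟶ B) (g : B' ⟶ C) (hA : Z₁ = A) (hB : B = Z₂) (hB' : Z₂ = B') (hC : C = Z₃)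
    (h : Function.Exact ⇑(f ≫ eqToHom (hB.trans hB')) ⇑g) :
    Function.Exact ⇑(eqToHom hA ≫ f ≫ eqToHom hB) ⇑(eqToHom hB' ≫ g ≫ eqToHom hC) := by
  subst hA; subst hB; subst hB'; subst hC; simpa using h

lemma exact_comp_surj {A₀ A B C : ModuleCat.{u} R} (u : A₀ ⟶ A) (f : A ⟶ B) (g : B ⟶ C)
    (hu : Function.Surjective u) (h : Function.Exact ⇑f ⇑g) :
    Function.Exact ⇑(u ≫ f) ⇑g := by
  intro y
  rw [h y]
  constructor
  · rintro ⟨x, rfl⟩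
    obtain ⟨z, rfl⟩ := hu x
    exact ⟨z, by simp⟩
  · rintro ⟨z, rfl⟩
    exact ⟨u z, by simp⟩

lemma exact_inj_comp {A B C C' : ModuleCat.{u} R} (f : A ⟶ B) (g : B ⟶ C) (v : C ⟶ C')
    (hv : Function.Injective v) (h : Function.Exact ⇑f ⇑g) :
    Function.Exact ⇑f ⇑(g ≫ v) := by
  intro y
  rw [← h y]
  constructor
  · intro hy
    apply hv
    rw [map_zero]
    simpa using hy
  · intro hy
    have : (g ≫ v) y = v (g y) := by simp
    rw [this, hy, map_zero]

lemma exact_cast_shift {Y : ℕ → ModuleCat.{u} R} (dY : ∀ i, Y (i + 1) ⟶ Y i)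
    {C : ModuleCat.{u} R} {s t : ℕ} (hst : s = t) (p : Y s = Y t) (g : Y t ⟶ C)
    (hex : Function.Exact ⇑(dY t) ⇑g) : Function.Exact ⇑(dY s ≫ eqToHom p) ⇑g := by
  subst hst
  rw [comp_eqToHom_self]
  exact hex

end SGX

namespace SGX
variable {R : Type u} [Ring R]

/-- The spliced sequence of objects. -/
def spliceZ (X Y : ℕ → ModuleCat.{u} R) (a : ℕ) (i : ℕ) : ModuleCat.{u} R :=
  if i ≤ a then X i else Y (i - a)

lemma spliceZ_le {X Y : ℕ → ModuleCat.{u} R} {a i : ℕ} (h : i ≤ a) :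
    spliceZ X Y a i = X i := if_pos h

lemma spliceZ_gt {X Y : ℕ → ModuleCat.{u} R} {a i : ℕ} (h : a < i) :
    spliceZ X Y a i = Y (i - a) := if_neg (by omega)

/-- The spliced differentials. -/
def spliceD (X Y : ℕ → ModuleCat.{u} R) (a : ℕ) (dX : ∀ i, X (i + 1) ⟶ X i)
    (dY : ∀ i, Y (i + 1) ⟶ Y i) (w : Y 1 ⟶ X a) (i : ℕ) :
    spliceZ X Y a (i + 1) ⟶ spliceZ X Y a i :=
  if h : i + 1 ≤ a then
    eqToHom (spliceZ_le h) ≫ dX i ≫ eqToHom (spliceZ_le (by omega)).symm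
  else if h2 : i ≤ a then
    eqToHom (show spliceZ X Y a (i + 1) = Y 1 by
      rw [spliceZ_gt (show a < i + 1 by omega)]; congr 1; omega) ≫ w ≫
      eqToHom (show X a = spliceZ X Y a i by
        rw [spliceZ_le h2, show i = a by omega])
  else
    eqToHom (show spliceZ X Y a (i + 1) = Y (i - a + 1) by
      rw [spliceZ_gt (show a < i + 1 by omega)]; congr 1; omega) ≫ dY (i - a) ≫
      eqToHom (spliceZ_gt (show a < i by omega)).symm

/-- Splicing two exact sequences with isomorphic endpoints. -/
lemma seq_splice {M : ModuleCat.{u} R} {m a b : ℕ} (ha : 1 ≤ a) (hb : 1 ≤ b)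
    (hA : ∃ (X : ℕ → ModuleCat.{u} R) (d : ∀ i, X (i + 1) ⟶ X i),
      Nonempty (X 0 ≅ M) ∧ Nonempty (X (a + 1) ≅ M) ∧
      (∀ i, 1 ≤ i → i ≤ a → HasPdLE R (X i) m) ∧ IsExactSeq R d a)
    (hB : ∃ (X : ℕ → ModuleCat.{u} R) (d : ∀ i, X (i + 1) ⟶ X i),
      Nonempty (X 0 ≅ M) ∧ Nonempty (X (b + 1) ≅ M) ∧
      (∀ i, 1 ≤ i → i ≤ b → HasPdLE R (X i) m) ∧ IsExactSeq R d b) :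
    ∃ (X : ℕ → ModuleCat.{u} R) (d : ∀ i, X (i + 1) ⟶ X i),
      Nonempty (X 0 ≅ M) ∧ Nonempty (X (a + b + 1) ≅ M) ∧
      (∀ i, 1 ≤ i → i ≤ a + b → HasPdLE R (X i) m) ∧ IsExactSeq R d (a + b) := by
  obtain ⟨X, dX, ⟨e0⟩, ⟨ea⟩, hpdX, hXinj, hXsurj, hXex⟩ := hA
  obtain ⟨Y, dY, ⟨f0⟩, ⟨fb⟩, hpdY, hYinj, hYsurj, hYex⟩ := hB
  refine ⟨spliceZ X Y a, spliceD X Y a dX dY (dY 0 ≫ (f0.hom ≫ ea.inv ≫ dX a)),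
    ⟨eqToIso (spliceZ_le (Nat.zero_le a)) ≪≫ e0⟩,
    ⟨eqToIso (show spliceZ X Y a (a + b + 1) = Y (b + 1) by
      rw [spliceZ_gt (show a < a + b + 1 by omega)]; congr 1; omega) ≪≫ fb⟩,
    ?_, ?_, ?_, ?_⟩
  · -- pd bounds
    intro i h1 h2
    by_cases hia : i ≤ a
    · rw [spliceZ_le hia]
      exact hpdX i h1 hia
    · rw [spliceZ_gt (by omega)]
      exact hpdY (i - a) (by omega) (by omega)
  · -- injectivity at the top
    simp only [spliceD, dif_neg (show ¬(a + b + 1 ≤ a) by omega),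
      dif_neg (show ¬(a + b ≤ a) by omega)]
    apply inj_cast
    rw [show a + b - a = b by omega]
    exact hYinj
  · -- surjectivity at the bottom
    simp only [spliceD, dif_pos (show 0 + 1 ≤ a by omega)]
    apply surj_cast
    exact hXsurj
  · -- exactness
    intro i hi
    rcases Nat.lt_trichotomy (i + 1) a with h | h | h
    · -- both in the X part
      simp only [spliceD, dif_pos (show i + 1 + 1 ≤ a by omega),
        dif_pos (show i + 1 ≤ a by omega)]
      apply exact_cast₂
      rw [comp_eqToHom_self]
      exact hXex i (by omega)
    · -- the gluing map, left case
      subst h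
      simp only [spliceD, dif_neg (show ¬(i + 1 + 1 ≤ i + 1) by omega),
        dif_pos (le_refl (i + 1))]
      apply exact_cast₂
      rw [comp_eqToHom_self]
      apply exact_comp_surj _ _ _ hYsurj
      apply exact_comp_surj _ _ _ (iso_bij f0).2
      apply exact_comp_surj _ _ _ (iso_bij ea.symm).2
      exact hXex i (by omega)
    · rcases Nat.eq_or_lt_of_le (Nat.lt_succ_iff.mp h) with h2 | h2
      · -- the gluing map, right case
        subst h2
        simp only [spliceD, dif_neg (show ¬(a + 1 + 1 ≤ a) by omega),
          dif_neg (show ¬(a + 1 ≤ a) by omega), dif_pos (le_refl a)]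
        apply exact_cast₂
        apply exact_cast_shift dY (show a + 1 - a = 1 by omega)
        apply exact_inj_comp _ _ _ ?_ (hYex 0 (by omega))
        apply inj_comp _ _ (iso_bij f0).1
        apply inj_comp _ _ (iso_bij ea.symm).1
        exact hXinj
      · -- both in the Y part
        simp only [spliceD, dif_neg (show ¬(i + 1 + 1 ≤ a) by omega),
          dif_neg (show ¬(i + 1 ≤ a) by omega), dif_neg (show ¬(i ≤ a) by omega)]
        apply exact_cast₂
        apply exact_cast_shift dY (show i + 1 - a = i - a + 1 by omega)
        exact hYex (i - a) (by omega)

lemma seqPart_mul (n m : ℕ) (hn : 1 ≤ n) (M : ModuleCat.{u} R)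
    (h : ∃ (X : ℕ → ModuleCat.{u} R) (d : ∀ i, X (i + 1) ⟶ X i),
      Nonempty (X 0 ≅ M) ∧ Nonempty (X (n + 1) ≅ M) ∧
      (∀ i, 1 ≤ i → i ≤ n → HasPdLE R (X i) m) ∧ IsExactSeq R d n) :
    ∀ k, 1 ≤ k →
      ∃ (X : ℕ → ModuleCat.{u} R) (d : ∀ i, X (i + 1) ⟶ X i),
        Nonempty (X 0 ≅ M) ∧ Nonempty (X (n * k + 1) ≅ M) ∧
        (∀ i, 1 ≤ i → i ≤ n * k → HasPdLE R (X i) m) ∧ IsExactSeq R d (n * k) := by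
  intro k
  induction k with
  | zero => intro h0; exact absurd h0 (by omega)
  | succ k ih =>
    intro _
    rcases Nat.eq_zero_or_pos k with rfl | hk
    · rw [Nat.mul_one]
      exact h
    · rw [Nat.mul_succ]
      exact seq_splice (Nat.mul_pos (by omega) hk) hn (ih hk) h

lemma sg_mul (n m : ℕ) (hn : 1 ≤ n) (M : ModuleCat.{u} R)
    (hM : IsSGProjective R n m M) (k : ℕ) (hk : 1 ≤ k) :
    IsSGProjective R (n * k) m M :=
  ⟨seqPart_mul n m hn M hM.1 k hk, hM.2⟩

end SGX

/-- An `(n,m)`-SG-projective module is `(nk,m)`-SG-projective for every `k ≥ 1`;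
in particular every `(1,m)`-SG-projective module is `(n,m)`-SG-projective for every `n ≥ 1`. -/
theorem sgProjective_mul {R : Type u} [Ring R] (n m : ℕ) (hn : 1 ≤ n)
    (M : ModuleCat.{u} R) (hM : IsSGProjective R n m M) :
    (∀ k, 1 ≤ k → IsSGProjective R (n * k) m M) ∧
      (∀ N : ModuleCat.{u} R, IsSGProjective R 1 m N →
        ∀ n', 1 ≤ n' → IsSGProjective R n' m N) := by
  constructor
  · intro k hk
    exact SGX.sg_mul n m hn M hM k hk
  · intro N hN n' hn'
    have := SGX.sg_mul 1 m le_rfl N hN n' hn'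
    rwa [Nat.one_mul] at this
end

section
/- If M is an (n,m)-SG-projective module and K_1 is a first syzygy of M (i.e., there is a short exact sequence 0 → K_1 → P_0 → M → 0 with P_0 projective), then K_1 is (n, m−1)-SG-projective (where m ≥ 1). -/
/- Formalization preliminaries: exact sequences of modules, projective/flat/Gorenstein
projective dimensions, (n,m)-strongly Gorenstein projective modules. -/

open CategoryTheory

universe u

variable (R : Type u) [Ring R]

namespace SGAux
open CategoryTheory

variable {R : Type u} [Ring R]

lemma comp_app {A B C : ModuleCat.{u} R} (f : A ⟶ B) (g : B ⟶ C) (x : A) :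
    (f ≫ g) x = g (f x) := rfl

lemma iso_bij {A B : ModuleCat.{u} R} (e : A ≅ B) : Function.Bijective e.hom := by
  constructor
  · intro a b h
    have h1 := congrArg (fun φ : A ⟶ A => φ a) e.hom_inv_id
    have h2 := congrArg (fun φ : A ⟶ A => φ b) e.hom_inv_id
    simp only [comp_app, ModuleCat.id_apply] at h1 h2
    rw [← h1, ← h2, h]
  · intro b
    exact ⟨e.inv b, congrArg (fun φ : B ⟶ B => φ b) e.inv_hom_id⟩

lemma hom_inv_apply {A B : ModuleCat.{u} R} (e : A ≅ B) (x : ↥A) : e.inv (e.hom x) = x :=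
  congrArg (fun φ : A ⟶ A => φ x) e.hom_inv_id

lemma inv_hom_apply {A B : ModuleCat.{u} R} (e : A ≅ B) (x : ↥B) : e.hom (e.inv x) = x :=
  congrArg (fun φ : B ⟶ B => φ x) e.inv_hom_id

lemma inj_comp {A B C : ModuleCat.{u} R} {f : A ⟶ B} {g : B ⟶ C}
    (hf : Function.Injective f) (hg : Function.Injective g) : Function.Injective (f ≫ g) :=
  fun a b h => hf (hg h)

lemma surj_comp {A B C : ModuleCat.{u} R} {f : A ⟶ B} {g : B ⟶ C}
    (hf : Function.Surjective f) (hg : Function.Surjective g) : Function.Surjective (f ≫ g) := by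
  intro c
  obtain ⟨b, rfl⟩ := hg c
  obtain ⟨a, rfl⟩ := hf b
  exact ⟨a, rfl⟩

lemma exact_surj_left {A' A B C : ModuleCat.{u} R} {e : A' ⟶ A} {f : A ⟶ B} {g : B ⟶ C}
    (he : Function.Surjective e) (h : Function.Exact f g) : Function.Exact (e ≫ f) g := by
  intro y
  rw [h y]
  constructor
  · rintro ⟨a, rfl⟩
    obtain ⟨a', rfl⟩ := he a
    exact ⟨a', rfl⟩
  · rintro ⟨a', rfl⟩
    exact ⟨e a', rfl⟩

lemma exact_inj_right {A B C C' : ModuleCat.{u} R} {f : A ⟶ B} {g : B ⟶ C} {e : C ⟶ C'}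
    (he : Function.Injective e) (h : Function.Exact f g) : Function.Exact f (g ≫ e) := by
  intro y
  rw [← h y]
  constructor
  · intro hy
    have : e (g y) = e 0 := by simpa [map_zero] using hy
    exact he this
  · intro hy
    show e (g y) = 0
    rw [hy, map_zero]

lemma hasPdLE_of_iso {A B : ModuleCat.{u} R} {k : ℕ} (h : HasPdLE R A k) (e : A ≅ B) :
    HasPdLE R B k := by
  obtain ⟨X, d, ⟨e0⟩, hproj, hex⟩ := h
  exact ⟨X, d, ⟨e0 ≪≫ e⟩, hproj, hex⟩

lemma splice (n : ℕ) (hn : 1 ≤ n) (m' : ℕ) (W V : ℕ → ModuleCat.{u} R)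
    (hβ : ∀ k, k ≤ n → ∃ β : V (k+1) ⟶ W k, Function.Surjective β ∧
      (k < n → ∃ α : W (k+1) ⟶ V (k+1), Function.Injective α ∧ Function.Exact α β) ∧
      (k = n → Function.Injective β))
    (hpd : ∀ k, 1 ≤ k → k ≤ n → HasPdLE R (V k) m') :
    ∃ (X : ℕ → ModuleCat.{u} R) (d : ∀ i, X (i + 1) ⟶ X i),
      Nonempty (X 0 ≅ W 0) ∧ Nonempty (X (n+1) ≅ V (n+1)) ∧
      (∀ i, 1 ≤ i → i ≤ n → HasPdLE R (X i) m') ∧ IsExactSeq R d n := by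
  choose β hβs hα hβtop using hβ
  choose α hαi hαe using hα
  let Xf : ℕ → ModuleCat.{u} R := fun i => match i with
    | 0 => W 0
    | (i+1) => V (i+1)
  let df : ∀ j, Xf (j+1) ⟶ Xf j := fun j => match j with
    | 0 => β 0 (Nat.zero_le n)
    | (j+1) => if h : j+1 ≤ n then β (j+1) h ≫ α j (by omega) (by omega) else 0
  have hd0 : df 0 = β 0 (Nat.zero_le n) := rfl
  have hds : ∀ j (h : j+1 ≤ n), df (j+1) = β (j+1) h ≫ α j (by omega) (by omega) :=
    fun j h => dif_pos h
  refine ⟨Xf, df, ⟨Iso.refl _⟩, ⟨Iso.refl _⟩, ?_, ?_, ?_, ?_⟩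
  · intro i h1 h2
    obtain ⟨i', rfl⟩ : ∃ i', i = i' + 1 := ⟨i - 1, by omega⟩
    exact hpd _ h1 h2
  · -- injectivity of df n
    obtain ⟨j, rfl⟩ : ∃ j, n = j + 1 := ⟨n - 1, by omega⟩
    rw [hds j (le_refl _)]
    exact inj_comp (hβtop (j+1) (le_refl _) rfl) (hαi j _ _)
  · -- surjectivity of df 0
    rw [hd0]
    exact hβs 0 _
  · -- exactness
    intro i hi
    match i with
    | 0 =>
      rw [hds 0 (by omega), hd0]
      exact exact_surj_left (hβs 1 _) (hαe 0 _ _)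
    | (i+1) =>
      rw [hds (i+1) (by omega), hds i (by omega)]
      exact exact_inj_right (hαi i _ _) (exact_surj_left (hβs (i+2) _) (hαe (i+1) _ _))

end SGAux
namespace SGAux
open CategoryTheory

variable {R : Type u} [Ring R]

lemma moduleProjective_of_projective {T : ModuleCat.{u} R} (h : Projective T) :
    Module.Projective R ↥T :=
  (IsProjective.iff_projective ↥T).mpr h

lemma projective_of_moduleProjective {T : Type u} [AddCommGroup T] [Module R T]
    (h : Module.Projective R T) : Projective (ModuleCat.of R T) :=
  (IsProjective.iff_projective T).mp h

lemma horseshoe {A B C : ModuleCat.{u} R} (ι : A ⟶ B) (π : B ⟶ C)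
    (hι : Function.Injective ι) (hπ : Function.Surjective π) (hexact : Function.Exact ι π)
    {TA WA : ModuleCat.{u} R} (pA : TA ⟶ A) (jA : WA ⟶ TA) (hTA : Projective TA)
    (hpA : Function.Surjective pA) (hjA : Function.Injective jA) (hexA : Function.Exact jA pA)
    {TC WC : ModuleCat.{u} R} (pC : TC ⟶ C) (jC : WC ⟶ TC) (hTC : Projective TC)
    (hpC : Function.Surjective pC) (hjC : Function.Injective jC) (hexC : Function.Exact jC pC) :
    ∃ (V : ModuleCat.{u} R) (α : WA ⟶ V) (β : V ⟶ WC),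
      Function.Injective α ∧ Function.Surjective β ∧ Function.Exact α β ∧
      ∃ (S : ModuleCat.{u} R) (k : V ⟶ S) (q : S ⟶ B),
        Projective S ∧ Function.Injective k ∧ Function.Surjective q ∧ Function.Exact k q := by
  haveI hTCm : Module.Projective R ↥TC := moduleProjective_of_projective hTC
  haveI hTAm : Module.Projective R ↥TA := moduleProjective_of_projective hTA
  obtain ⟨σ, hσ⟩ := Module.projective_lifting_property (π.hom : ↥B →ₗ[R] ↥C) (pC.hom : ↥TC →ₗ[R] ↥C) hπ
  have hσ' : ∀ t, π (σ t) = pC t := fun t => LinearMap.congr_fun hσ t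
  -- the epimorphism q : TA × TC → B
  set q : (↥TA × ↥TC) →ₗ[R] ↥B :=
    (LinearMap.comp (ι.hom : ↥A →ₗ[R] ↥B) (pA.hom : ↥TA →ₗ[R] ↥A)).comp
        (LinearMap.fst R ↥TA ↥TC) + σ.comp (LinearMap.snd R ↥TA ↥TC) with hqdef
  have hq_apply : ∀ x : ↥TA × ↥TC, q x = ι (pA x.1) + σ x.2 := fun x => rfl
  have hqsurj : Function.Surjective q := by
    intro b
    obtain ⟨t, ht⟩ := hpC (π b)
    have hker : π (b - σ t) = 0 := by
      rw [map_sub, hσ' t, ht, sub_self]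
    obtain ⟨a, ha⟩ := (hexact _).mp hker
    obtain ⟨ta, hta⟩ := hpA a
    refine ⟨(ta, t), ?_⟩
    rw [hq_apply, hta, ha]
    abel
  -- the kernel V
  set Vsub := LinearMap.ker q with hVdef
  set V := ModuleCat.of R ↥Vsub with hVdef2
  -- the map α : WA → V
  have hαmem : ∀ w : ↥WA, (LinearMap.prod (jA.hom : ↥WA →ₗ[R] ↥TA) 0) w ∈ Vsub := by
    intro w
    have h1 : pA (jA w) = 0 := (hexA (jA w)).mpr ⟨w, rfl⟩
    show q _ = 0
    rw [hq_apply]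
    show ι (pA (jA w)) + σ 0 = 0
    rw [h1, map_zero, map_zero, add_zero]
  set α : ↥WA →ₗ[R] ↥Vsub :=
    LinearMap.codRestrict Vsub (LinearMap.prod (jA.hom : ↥WA →ₗ[R] ↥TA) 0) hαmem with hαdef
  have hαinj : Function.Injective α := by
    intro w w' h
    have : jA w = jA w' := congrArg (fun v : ↥Vsub => (v : ↥TA × ↥TC).1) h
    exact hjA this
  -- the map β : V → WC
  set eC := LinearEquiv.ofInjective (jC.hom : ↥WC →ₗ[R] ↥TC) hjC with heCdef
  have hjCsymm : ∀ z : LinearMap.range (jC.hom : ↥WC →ₗ[R] ↥TC), jC (eC.symm z) = (z : ↥TC) := by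
    intro z
    conv_rhs => rw [← eC.apply_symm_apply z]
    rfl
  have hβmem : ∀ v : ↥Vsub, (v : ↥TA × ↥TC).2 ∈ LinearMap.range (jC.hom : ↥WC →ₗ[R] ↥TC) := by
    intro v
    have hv : q (v : ↥TA × ↥TC) = 0 := v.2
    have h1 : pC (v : ↥TA × ↥TC).2 = 0 := by
      have := congrArg π hv
      rw [hq_apply] at this
      simp only [map_add, map_zero] at this
      have h2 : π (ι (pA (v : ↥TA × ↥TC).1)) = 0 := by
        have := (hexact (ι (pA (v : ↥TA × ↥TC).1))).mpr ⟨_, rfl⟩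
        exact this
      rw [h2, zero_add, hσ'] at this
      exact this
    exact (hexC _).mp h1
  set sndV : ↥Vsub →ₗ[R] ↥TC :=
    (LinearMap.snd R ↥TA ↥TC).comp Vsub.subtype with hsndVdef
  set β : ↥Vsub →ₗ[R] ↥WC :=
    (eC.symm.toLinearMap).comp
      (LinearMap.codRestrict (LinearMap.range (jC.hom : ↥WC →ₗ[R] ↥TC)) sndV hβmem) with hβdef
  have hβ_apply : ∀ v : ↥Vsub, jC (β v) = (v : ↥TA × ↥TC).2 := by
    intro v
    show jC (eC.symm ⟨(v : ↥TA × ↥TC).2, hβmem v⟩) = _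
    rw [hjCsymm]
  have hβzero : ∀ v : ↥Vsub, β v = 0 ↔ (v : ↥TA × ↥TC).2 = 0 := by
    intro v
    constructor
    · intro h
      rw [← hβ_apply v, h, map_zero]
    · intro h
      have : jC (β v) = jC 0 := by rw [hβ_apply v, h, map_zero]
      exact hjC this
  have hβsurj : Function.Surjective β := by
    intro w
    have h1 : pC (jC w) = 0 := (hexC (jC w)).mpr ⟨w, rfl⟩
    have h2 : π (σ (jC w)) = 0 := by rw [hσ', h1]
    obtain ⟨a, ha⟩ := (hexact _).mp h2
    obtain ⟨ta, hta⟩ := hpA a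
    have hmem : ((-ta, jC w) : ↥TA × ↥TC) ∈ Vsub := by
      show q _ = 0
      rw [hq_apply]
      show ι (pA (-ta)) + σ (jC w) = 0
      rw [map_neg, map_neg, hta, ha]
      abel
    refine ⟨⟨_, hmem⟩, ?_⟩
    have := hβ_apply ⟨_, hmem⟩
    apply hjC
    rw [this]
  have hexαβ : Function.Exact α β := by
    intro v
    rw [hβzero v]
    constructor
    · intro h
      have hv : q (v : ↥TA × ↥TC) = 0 := v.2
      rw [hq_apply, h, map_zero, add_zero] at hv
      have h1 : pA (v : ↥TA × ↥TC).1 = 0 := by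
        apply hι
        rw [hv, map_zero]
      obtain ⟨w, hw⟩ := (hexA _).mp h1
      refine ⟨w, ?_⟩
      apply Subtype.ext
      show ((jA w, (0 : ↥TC)) : ↥TA × ↥TC) = (v : ↥TA × ↥TC)
      refine Prod.ext ?_ ?_
      · exact hw
      · exact h.symm
    · rintro ⟨w, rfl⟩
      rfl
  refine ⟨V, ModuleCat.ofHom α, ModuleCat.ofHom β, hαinj, hβsurj, hexαβ, ModuleCat.of R (↥TA × ↥TC),
    ModuleCat.ofHom Vsub.subtype, ModuleCat.ofHom q, ?_,
    Subtype.coe_injective, hqsurj, ?_⟩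
  · exact projective_of_moduleProjective inferInstance
  · intro s
    constructor
    · intro hs
      exact ⟨⟨s, hs⟩, rfl⟩
    · rintro ⟨⟨s', hs'⟩, rfl⟩
      exact hs'

end SGAux
namespace SGAux
open CategoryTheory

variable {R : Type u} [Ring R]

noncomputable def isoToLinearEquiv {A B : ModuleCat.{u} R} (e : A ≅ B) : ↥A ≃ₗ[R] ↥B :=
  LinearEquiv.ofBijective (e.hom.hom : ↥A →ₗ[R] ↥B) (iso_bij e)

lemma hasPdLE_of_equiv {A B : ModuleCat.{u} R} {k : ℕ} (h : HasPdLE R A k)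
    (e : ↥A ≃ₗ[R] ↥B) : HasPdLE R B k :=
  hasPdLE_of_iso h e.toModuleIso

/-- Step 1: the first real syzygy of a length-`m` resolution has pd ≤ m-1. -/
lemma hasPdLE_ker_of_res {m : ℕ} (hm : 1 ≤ m)
    (Y : ℕ → ModuleCat.{u} R) (δ : ∀ i, Y (i+1) ⟶ Y i)
    (hproj : ∀ i, 1 ≤ i → i ≤ m+1 → Projective (Y i))
    (hinj : Function.Injective (δ m)) (hex : ∀ i < m, Function.Exact (δ (i+1)) (δ i)) :
    HasPdLE R (ModuleCat.of R ↥(LinearMap.ker ((δ 0).hom : ↥(Y 1) →ₗ[R] ↥(Y 0)))) (m-1) := by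
  have hd10 : ∀ x, δ 0 (δ 1 x) = 0 := fun x => (hex 0 hm).apply_apply_eq_zero x
  let Ker := LinearMap.ker ((δ 0).hom : ↥(Y 1) →ₗ[R] ↥(Y 0))
  let Xf : ℕ → ModuleCat.{u} R := fun i => match i with
    | 0 => ModuleCat.of R ↥Ker
    | (j+1) => Y (j+2)
  let df : ∀ j, Xf (j+1) ⟶ Xf j := fun j => match j with
    | 0 => ModuleCat.ofHom (LinearMap.codRestrict Ker ((δ 1).hom : ↥(Y 2) →ₗ[R] ↥(Y 1)) hd10)
    | (j+1) => δ (j+2)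
  refine ⟨Xf, df, ⟨Iso.refl _⟩, ?_, ?_, ?_, ?_⟩
  · intro i h1 h2
    obtain ⟨j, rfl⟩ : ∃ j, i = j + 1 := ⟨i - 1, by omega⟩
    exact hproj (j+2) (by omega) (by omega)
  · -- injectivity of df (m-1)
    rcases Nat.lt_or_ge m 2 with h2 | h2
    · obtain rfl : m = 1 := by omega
      intro x y h
      have := congrArg (Subtype.val : ↥Ker → ↥(Y 1)) h
      exact hinj this
    · obtain ⟨j, rfl⟩ : ∃ j, m = j + 2 := ⟨m - 2, by omega⟩
      show Function.Injective (δ (j+2))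
      exact hinj
  · -- surjectivity of df 0
    rintro ⟨x, hx⟩
    obtain ⟨u, hu⟩ := (hex 0 hm x).mp hx
    exact ⟨u, Subtype.ext hu⟩
  · -- exactness
    intro i hi
    match i with
    | 0 =>
      intro y
      constructor
      · intro h
        have h1 : δ 1 y = 0 := congrArg (Subtype.val : ↥Ker → ↥(Y 1)) h
        exact (hex 1 (by omega) y).mp h1
      · rintro ⟨u, rfl⟩
        apply Subtype.ext
        show δ 1 (δ 2 u) = 0
        exact (hex 1 (by omega)).apply_apply_eq_zero u
    | (i+1) =>
      exact hex (i+2) (by omega)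

/-- Step 2: pd is preserved by adding a projective direct factor. -/
lemma hasPdLE_prod {A : ModuleCat.{u} R} {k : ℕ} (h : HasPdLE R A k)
    {Pm : ModuleCat.{u} R} (hPm : Projective Pm) :
    HasPdLE R (ModuleCat.of R (↥A × ↥Pm)) k := by
  obtain ⟨X, d, ⟨e⟩, hproj, hinj, hsurj, hex⟩ := h
  haveI h1m : Module.Projective R ↥(X 1) :=
    moduleProjective_of_projective (hproj 1 le_rfl (by omega))
  haveI hPmm : Module.Projective R ↥Pm := moduleProjective_of_projective hPm
  let Xf : ℕ → ModuleCat.{u} R := fun i => match i with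
    | 0 => ModuleCat.of R (↥(X 0) × ↥Pm)
    | 1 => ModuleCat.of R (↥(X 1) × ↥Pm)
    | (j+2) => X (j+2)
  let df : ∀ j, Xf (j+1) ⟶ Xf j := fun j => match j with
    | 0 => ModuleCat.ofHom (LinearMap.prodMap ((d 0).hom : ↥(X 1) →ₗ[R] ↥(X 0)) LinearMap.id)
    | 1 => ModuleCat.ofHom ((LinearMap.inl R ↥(X 1) ↥Pm).comp ((d 1).hom : ↥(X 2) →ₗ[R] ↥(X 1)))
    | (j+2) => d (j+2)
  refine ⟨Xf, df, ⟨(LinearEquiv.prodCongr (isoToLinearEquiv e) (LinearEquiv.refl R ↥Pm)).toModuleIso⟩,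
    ?_, ?_, ?_, ?_⟩
  · intro i hi1 hi2
    match i, hi1 with
    | 1, _ => exact projective_of_moduleProjective inferInstance
    | (j+2), _ => exact hproj (j+2) (by omega) hi2
  · -- injectivity at the top
    match k, hinj with
    | 0, hinj =>
      rintro ⟨x, p⟩ ⟨y, q'⟩ hxy
      have h1 : d 0 x = d 0 y := congrArg Prod.fst hxy
      have h2 : p = q' := congrArg Prod.snd hxy
      rw [hinj h1, h2]
    | 1, hinj =>
      intro x y hxy
      exact hinj (congrArg Prod.fst hxy)
    | (j+2), hinj => exact hinj
  · -- surjectivity at the bottom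
    rintro ⟨a, p⟩
    obtain ⟨x, hx⟩ := hsurj a
    refine ⟨(x, p), ?_⟩
    show (d 0 x, p) = (a, p)
    rw [hx]
  · -- exactness
    intro i hi
    match i with
    | 0 =>
      rintro ⟨x, p⟩
      constructor
      · intro hz
        have h1 : d 0 x = 0 := congrArg Prod.fst hz
        have h2 : p = 0 := congrArg Prod.snd hz
        obtain ⟨u, hu⟩ := (hex 0 hi x).mp h1
        refine ⟨u, ?_⟩
        show (d 1 u, (0 : ↥Pm)) = (x, p)
        rw [hu, h2]
      · rintro ⟨u, hu⟩
        rw [← hu]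
        show (d 0 (d 1 u), (0 : ↥Pm)) = 0
        rw [(hex 0 hi).apply_apply_eq_zero u]
        rfl
    | 1 =>
      intro y
      constructor
      · intro hz
        have h1 : d 1 y = 0 := congrArg Prod.fst hz
        exact (hex 1 hi y).mp h1
      · rintro ⟨u, rfl⟩
        show ((d 1 (d 2 u)), (0 : ↥Pm)) = 0
        rw [(hex 1 hi).apply_apply_eq_zero u]
        rfl
    | (i+2) => exact hex (i+2) hi
end SGAux
namespace SGAux
open CategoryTheory

variable {R : Type u} [Ring R]

/-- Step 3: pd of a direct summand with projective complement. -/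
lemma hasPdLE_of_prod {A Pm : ModuleCat.{u} R} {k : ℕ} (hPm : Projective Pm)
    (h : HasPdLE R (ModuleCat.of R (↥A × ↥Pm)) k) : HasPdLE R A k := by
  obtain ⟨X, d, ⟨e⟩, hproj, hinj, hsurj, hex⟩ := h
  haveI hPmm : Module.Projective R ↥Pm := moduleProjective_of_projective hPm
  haveI h1m : Module.Projective R ↥(X 1) :=
    moduleProjective_of_projective (hproj 1 le_rfl (by omega))
  have hesurj : Function.Surjective e.hom := (iso_bij e).2
  have heinj : Function.Injective e.hom := (iso_bij e).1
  set ε : ↥(X 1) →ₗ[R] ↥Pm :=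
    (LinearMap.snd R ↥A ↥Pm).comp ((e.hom.hom : ↥(X 0) →ₗ[R] (↥A × ↥Pm)).comp
      ((d 0).hom : ↥(X 1) →ₗ[R] ↥(X 0))) with hεdef
  have hεsurj : Function.Surjective ε := by
    intro p
    obtain ⟨x0, hx0⟩ := hesurj ((0 : ↥A), p)
    obtain ⟨x1, hx1⟩ := hsurj x0
    exact ⟨x1, by show (e.hom (d 0 x1)).2 = p; rw [hx1, hx0]⟩
  obtain ⟨σ, hσ⟩ := Module.projective_lifting_property ε LinearMap.id hεsurj
  have hσ' : ∀ p, ε (σ p) = p := fun p => LinearMap.congr_fun hσ p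
  set N := LinearMap.ker ε with hNdef
  -- N is projective (retract of X 1)
  have hretr : ∀ x : ↥(X 1), ε (x - σ (ε x)) = 0 := by
    intro x
    rw [map_sub, hσ', sub_self]
  set r : ↥(X 1) →ₗ[R] ↥N :=
    LinearMap.codRestrict N (LinearMap.id - σ.comp ε) hretr with hrdef
  have hNproj : Module.Projective R ↥N := by
    refine Module.Projective.of_split N.subtype r ?_
    apply LinearMap.ext
    rintro ⟨x, hx⟩
    apply Subtype.ext
    show x - σ (ε x) = x
    rw [show ε x = 0 from hx, map_zero, sub_zero]
  -- the map N → A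
  set πA : ↥N →ₗ[R] ↥A :=
    (LinearMap.fst R ↥A ↥Pm).comp ((e.hom.hom : ↥(X 0) →ₗ[R] (↥A × ↥Pm)).comp
      (((d 0).hom : ↥(X 1) →ₗ[R] ↥(X 0)).comp N.subtype)) with hπAdef
  have hπA_apply : ∀ v : ↥N, πA v = (e.hom (d 0 (v : ↥(X 1)))).1 := fun v => rfl
  have hπAsurj : Function.Surjective πA := by
    intro a
    obtain ⟨x0, hx0⟩ := hesurj ((a, (0 : ↥Pm)))
    obtain ⟨x1, hx1⟩ := hsurj x0
    have hmem : x1 ∈ N := by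
      show (e.hom (d 0 x1)).2 = 0
      rw [hx1, hx0]
    exact ⟨⟨x1, hmem⟩, by rw [hπA_apply]; show (e.hom (d 0 x1)).1 = a; rw [hx1, hx0]⟩
  have hπAker : ∀ v : ↥N, πA v = 0 ↔ d 0 (v : ↥(X 1)) = 0 := by
    intro v
    constructor
    · intro hv
      apply heinj
      rw [map_zero]
      have h2 : (e.hom (d 0 (v : ↥(X 1)))).2 = 0 := v.2
      rw [hπA_apply] at hv
      exact Prod.ext hv h2
    · intro hv
      rw [hπA_apply, hv, map_zero]
      rfl
  let Xf : ℕ → ModuleCat.{u} R := fun i => match i with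
    | 0 => A
    | 1 => ModuleCat.of R ↥N
    | (j+2) => X (j+2)
  have hd1mem : 0 < k → ∀ x : ↥(X 2), d 1 x ∈ N := by
    intro hk x
    show (e.hom (d 0 (d 1 x))).2 = 0
    rw [(hex 0 hk).apply_apply_eq_zero x, map_zero]
    rfl
  let df : ∀ j, Xf (j+1) ⟶ Xf j := fun j => match j with
    | 0 => ModuleCat.ofHom πA
    | 1 => if hk : 0 < k then
        ModuleCat.ofHom (LinearMap.codRestrict N ((d 1).hom : ↥(X 2) →ₗ[R] ↥(X 1)) (hd1mem hk)) else 0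
    | (j+2) => d (j+2)
  have hdf1 : ∀ hk : 0 < k,
      df 1 = ModuleCat.ofHom (LinearMap.codRestrict N ((d 1).hom : ↥(X 2) →ₗ[R] ↥(X 1)) (hd1mem hk)) :=
    fun hk => dif_pos hk
  refine ⟨Xf, df, ⟨Iso.refl _⟩, ?_, ?_, ?_, ?_⟩
  · intro i hi1 hi2
    match i, hi1 with
    | 1, _ => exact projective_of_moduleProjective hNproj
    | (j+2), _ => exact hproj (j+2) (by omega) hi2
  · -- injectivity at the top
    match k, hinj, hex with
    | 0, hinj, _ =>
      have key : Function.Injective (πA : ↥N →ₗ[R] ↥A) := by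
        intro v w hvw
        have h1 : d 0 (v : ↥(X 1)) = d 0 (w : ↥(X 1)) := by
          apply heinj
          have h2 : (e.hom (d 0 (v : ↥(X 1)))).2 = (e.hom (d 0 (w : ↥(X 1)))).2 := by
            rw [show (e.hom (d 0 (v : ↥(X 1)))).2 = 0 from v.2,
              show (e.hom (d 0 (w : ↥(X 1)))).2 = 0 from w.2]
          exact Prod.ext hvw h2
        exact Subtype.ext (hinj h1)
      exact key
    | 1, hinj, _ =>
      rw [hdf1 (by omega)]
      intro x y hxy
      have := congrArg (Subtype.val : ↥N → ↥(X 1)) hxy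
      exact hinj this
    | (j+2), hinj, _ => exact hinj
  · exact hπAsurj
  · -- exactness
    intro i hi
    match i with
    | 0 =>
      rw [hdf1 hi]
      intro v
      constructor
      · intro hv
        have hv' : πA v = 0 := hv
        rw [hπAker v] at hv'
        obtain ⟨u, hu⟩ := (hex 0 hi _).mp hv'
        exact ⟨u, Subtype.ext hu⟩
      · rintro ⟨u, rfl⟩
        show πA _ = 0
        rw [hπAker]
        exact (hex 0 hi).apply_apply_eq_zero u
    | 1 =>
      rw [hdf1 (by omega)]
      intro y
      constructor
      · intro hz
        have h1 : d 1 y = 0 := congrArg (Subtype.val : ↥N → ↥(X 1)) hz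
        exact (hex 1 hi y).mp h1
      · rintro ⟨u, rfl⟩
        apply Subtype.ext
        exact (hex 1 hi).apply_apply_eq_zero u
    | (i+2) => exact hex (i+2) hi

/-- A split surjection decomposes the source. -/
lemma split_equiv {D Y : Type u} [AddCommGroup D] [AddCommGroup Y] [Module R D] [Module R Y]
    (π : D →ₗ[R] Y) (σ : Y →ₗ[R] D) (hσ : ∀ y, π (σ y) = y) :
    Nonempty (D ≃ₗ[R] ↥(LinearMap.ker π) × Y) := by
  have hmem : ∀ x : D, x - σ (π x) ∈ LinearMap.ker π := by
    intro x
    show π (x - σ (π x)) = 0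
    rw [map_sub, hσ, sub_self]
  refine ⟨LinearEquiv.ofLinear
    (LinearMap.prod (LinearMap.codRestrict (LinearMap.ker π) (LinearMap.id - σ.comp π) hmem) π)
    ((LinearMap.ker π).subtype.comp (LinearMap.fst R ↥(LinearMap.ker π) Y) +
      σ.comp (LinearMap.snd R ↥(LinearMap.ker π) Y)) ?_ ?_⟩
  · apply LinearMap.ext
    rintro ⟨⟨z, hz⟩, y⟩
    have hπz : π z = 0 := hz
    refine Prod.ext (Subtype.ext ?_) ?_
    · show (z + σ y) - σ (π (z + σ y)) = z
      rw [map_add, hπz, zero_add, hσ]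
      abel
    · show π (z + σ y) = y
      rw [map_add, hπz, zero_add, hσ]
  · apply LinearMap.ext
    intro x
    show (x - σ (π x)) + σ (π x) = x
    abel

/-- Schanuel: explicit equivalence `V × Y1 ≃ ker ε × S`. -/
lemma schanuel {B V S Y1 : ModuleCat.{u} R} (k : V ⟶ S) (q : S ⟶ B)
    (hk : Function.Injective k) (hq : Function.Surjective q) (hkq : Function.Exact k q)
    (ε : Y1 ⟶ B) (hε : Function.Surjective ε) (hS : Projective S) (hY : Projective Y1) :
    Nonempty ((↥V × ↥Y1) ≃ₗ[R] (↥(LinearMap.ker (ε.hom : ↥Y1 →ₗ[R] ↥B)) × ↥S)) := by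
  haveI hSm : Module.Projective R ↥S := moduleProjective_of_projective hS
  haveI hYm : Module.Projective R ↥Y1 := moduleProjective_of_projective hY
  set D := LinearMap.ker ((q.hom : ↥S →ₗ[R] ↥B).comp (LinearMap.fst R ↥S ↥Y1) -
    (ε.hom : ↥Y1 →ₗ[R] ↥B).comp (LinearMap.snd R ↥S ↥Y1)) with hDdef
  have hDmem : ∀ x : ↥S × ↥Y1, x ∈ D ↔ q x.1 = ε x.2 := by
    intro x
    show q x.1 - ε x.2 = 0 ↔ _
    constructor
    · intro h; exact sub_eq_zero.mp h
    · intro h; rw [h, sub_self]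
  set πS : ↥D →ₗ[R] ↥S := (LinearMap.fst R ↥S ↥Y1).comp D.subtype with hπSdef
  set πY : ↥D →ₗ[R] ↥Y1 := (LinearMap.snd R ↥S ↥Y1).comp D.subtype with hπYdef
  have hπSsurj : Function.Surjective πS := by
    intro s
    obtain ⟨y, hy⟩ := hε (q s)
    exact ⟨⟨(s, y), (hDmem _).mpr hy.symm⟩, rfl⟩
  have hπYsurj : Function.Surjective πY := by
    intro y
    obtain ⟨s, hs⟩ := hq (ε y)
    exact ⟨⟨(s, y), (hDmem _).mpr hs⟩, rfl⟩
  obtain ⟨σS, hσS⟩ := Module.projective_lifting_property πS LinearMap.id hπSsurj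
  obtain ⟨σY, hσY⟩ := Module.projective_lifting_property πY LinearMap.id hπYsurj
  obtain ⟨eS⟩ := split_equiv πS σS (fun s => LinearMap.congr_fun hσS s)
  obtain ⟨eY⟩ := split_equiv πY σY (fun y => LinearMap.congr_fun hσY y)
  -- ker πY ≃ V
  have hf1 : ∀ v : ↥V, (LinearMap.prod (k.hom : ↥V →ₗ[R] ↥S) 0) v ∈ D := by
    intro v
    refine (hDmem _).mpr ?_
    show q (k v) = ε 0
    rw [map_zero, hkq.apply_apply_eq_zero v]
  have hf2 : ∀ v : ↥V, LinearMap.codRestrict D _ hf1 v ∈ LinearMap.ker πY := fun v => rfl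
  set φ : ↥V →ₗ[R] ↥(LinearMap.ker πY) :=
    LinearMap.codRestrict (LinearMap.ker πY) (LinearMap.codRestrict D _ hf1) hf2 with hφdef
  have hφbij : Function.Bijective φ := by
    constructor
    · intro v w hvw
      apply hk
      exact congrArg (fun z : ↥(LinearMap.ker πY) => ((z : ↥D) : ↥S × ↥Y1).1) hvw
    · rintro ⟨⟨⟨s, y⟩, hD⟩, hker⟩
      have hy : y = 0 := hker
      have hqs : q s = 0 := by
        have := (hDmem (s, y)).mp hD
        rw [hy, map_zero] at this
        exact this
      obtain ⟨v, hv⟩ := (hkq s).mp hqs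
      refine ⟨v, ?_⟩
      apply Subtype.ext
      apply Subtype.ext
      show ((k v, (0 : ↥Y1)) : ↥S × ↥Y1) = (s, y)
      rw [hv, hy]
  -- ker πS ≃ ker ε
  have hg1 : ∀ y : ↥(LinearMap.ker (ε.hom : ↥Y1 →ₗ[R] ↥B)),
      (LinearMap.prod (0 : _ →ₗ[R] ↥S) (LinearMap.ker (ε.hom : ↥Y1 →ₗ[R] ↥B)).subtype) y ∈ D := by
    intro y
    refine (hDmem _).mpr ?_
    show q 0 = ε (y : ↥Y1)
    rw [map_zero, show ε (y : ↥Y1) = 0 from y.2]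
  have hg2 : ∀ y, LinearMap.codRestrict D _ hg1 y ∈ LinearMap.ker πS := fun y => rfl
  set ψ : ↥(LinearMap.ker (ε.hom : ↥Y1 →ₗ[R] ↥B)) →ₗ[R] ↥(LinearMap.ker πS) :=
    LinearMap.codRestrict (LinearMap.ker πS) (LinearMap.codRestrict D _ hg1) hg2 with hψdef
  have hψbij : Function.Bijective ψ := by
    constructor
    · intro v w hvw
      apply Subtype.ext
      exact congrArg (fun z : ↥(LinearMap.ker πS) => ((z : ↥D) : ↥S × ↥Y1).2) hvw
    · rintro ⟨⟨⟨s, y⟩, hD⟩, hker⟩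
      have hs : s = 0 := hker
      have hεy : ε y = 0 := by
        have := (hDmem (s, y)).mp hD
        rw [hs, map_zero] at this
        exact this.symm
      refine ⟨⟨y, hεy⟩, ?_⟩
      apply Subtype.ext
      apply Subtype.ext
      show (((0 : ↥S), y) : ↥S × ↥Y1) = (s, y)
      rw [hs]
  exact ⟨((LinearEquiv.prodCongr (LinearEquiv.ofBijective φ hφbij) (LinearEquiv.refl R ↥Y1)).trans
    eY.symm).trans (eS.trans
      (LinearEquiv.prodCongr (LinearEquiv.ofBijective ψ hψbij).symm (LinearEquiv.refl R ↥S)))⟩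

/-- The kernel of an epimorphism from a projective onto a module of pd ≤ m has pd ≤ m-1. -/
lemma pd_kernel {B V S : ModuleCat.{u} R} {m : ℕ} (hm : 1 ≤ m) (hB : HasPdLE R B m)
    (hS : Projective S) (k : V ⟶ S) (q : S ⟶ B) (hk : Function.Injective k)
    (hq : Function.Surjective q) (hkq : Function.Exact k q) : HasPdLE R V (m-1) := by
  obtain ⟨Y, δ, ⟨e⟩, hproj, hinj, hsurj, hex⟩ := hB
  set ε : Y 1 ⟶ B := δ 0 ≫ e.hom with hεdef
  have hεsurj : Function.Surjective ε := surj_comp hsurj (iso_bij e).2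
  have hker : LinearMap.ker (ε.hom : ↥(Y 1) →ₗ[R] ↥B) =
      LinearMap.ker ((δ 0).hom : ↥(Y 1) →ₗ[R] ↥(Y 0)) := by
    ext x
    constructor
    · intro hx
      have hx' : e.hom (δ 0 x) = 0 := hx
      show δ 0 x = 0
      apply (iso_bij e).1
      rw [hx', map_zero]
    · intro hx
      show e.hom (δ 0 x) = 0
      have hx' : δ 0 x = 0 := hx
      rw [hx', map_zero]
  have step1 : HasPdLE R (ModuleCat.of R ↥(LinearMap.ker ((δ 0).hom : ↥(Y 1) →ₗ[R] ↥(Y 0)))) (m-1) :=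
    hasPdLE_ker_of_res hm Y δ hproj hinj hex
  have step1' : HasPdLE R (ModuleCat.of R ↥(LinearMap.ker (ε.hom : ↥(Y 1) →ₗ[R] ↥B))) (m-1) := by
    rw [hker]
    exact step1
  have step2 : HasPdLE R
      (ModuleCat.of R (↥(LinearMap.ker (ε.hom : ↥(Y 1) →ₗ[R] ↥B)) × ↥S)) (m-1) :=
    hasPdLE_prod step1' hS
  obtain ⟨E⟩ := schanuel k q hk hq hkq ε hεsurj hS (hproj 1 le_rfl (by omega))
  have step3 : HasPdLE R (ModuleCat.of R (↥V × ↥(Y 1))) (m-1) :=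
    hasPdLE_of_equiv step2 E.symm
  exact hasPdLE_of_prod (hproj 1 le_rfl (by omega)) step3

end SGAux
namespace SGAux
open CategoryTheory

variable {R : Type u} [Ring R]

/-- The existence part of the main theorem. -/
lemma existence_part (n m : ℕ) (hn : 1 ≤ n) (hm : 1 ≤ m) (M K P : ModuleCat.{u} R)
    (hP : Projective P) (f : K ⟶ P) (g : P ⟶ M) (hf : Function.Injective f)
    (hg : Function.Surjective g) (hfg : Function.Exact f g)
    (X : ℕ → ModuleCat.{u} R) (d : ∀ i, X (i + 1) ⟶ X i)
    (e0 : X 0 ≅ M) (en : X (n+1) ≅ M) (hpd : ∀ i, 1 ≤ i → i ≤ n → HasPdLE R (X i) m)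
    (hdinj : Function.Injective (d n)) (hdsurj : Function.Surjective (d 0))
    (hdex : ∀ i < n, Function.Exact (d (i+1)) (d i)) :
    ∃ (Xs : ℕ → ModuleCat.{u} R) (ds : ∀ i, Xs (i + 1) ⟶ Xs i),
      Nonempty (Xs 0 ≅ K) ∧ Nonempty (Xs (n+1) ≅ K) ∧
      (∀ i, 1 ≤ i → i ≤ n → HasPdLE R (Xs i) (m-1)) ∧ IsExactSeq R ds n := by
  classical
  -- the chain of boundary modules
  set Bc : ℕ → ModuleCat.{u} R := fun j =>
    if j = 0 ∨ n ≤ j then M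
    else ModuleCat.of R ↥(LinearMap.range ((d j).hom : ↥(X (j+1)) →ₗ[R] ↥(X j))) with hBcdef
  have hBc0 : Bc 0 = M := if_pos (Or.inl rfl)
  have hBcn : ∀ j, n ≤ j → Bc j = M := fun j h => if_pos (Or.inr h)
  have hBcmid : ∀ j, 1 ≤ j → j < n →
      Bc j = ModuleCat.of R ↥(LinearMap.range ((d j).hom : ↥(X (j+1)) →ₗ[R] ↥(X j))) :=
    fun j h1 h2 => if_neg (by omega)
  -- the short exact sequences
  have hSES : ∀ k, k < n → ∃ (ι : Bc (k+1) ⟶ X (k+1)) (π : X (k+1) ⟶ Bc k),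
      Function.Injective ι ∧ Function.Surjective π ∧ Function.Exact ι π := by
    intro k hk
    have hexk : Function.Exact (d (k+1)) (d k) := hdex k hk
    -- construct π and the kernel description
    have hπ : ∃ π : X (k+1) ⟶ Bc k, Function.Surjective π ∧
        ∀ y : ↥(X (k+1)), π y = 0 ↔ d k y = 0 := by
      rcases Nat.eq_zero_or_pos k with rfl | hk1
      · rw [hBc0]
        refine ⟨d 0 ≫ e0.hom, surj_comp hdsurj (iso_bij e0).2, ?_⟩
        intro y
        constructor
        · intro h
          apply (iso_bij e0).1
          rw [show e0.hom (d 0 y) = 0 from h, map_zero]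
        · intro h
          show e0.hom (d 0 y) = 0
          rw [h, map_zero]
      · rw [hBcmid k hk1 (by omega)]
        refine ⟨ModuleCat.ofHom (LinearMap.rangeRestrict ((d k).hom : ↥(X (k+1)) →ₗ[R] ↥(X k))), ?_, ?_⟩
        · exact LinearMap.surjective_rangeRestrict _
        · intro y
          constructor
          · intro h
            have := congrArg (Subtype.val) h
            exact this
          · intro h
            exact Subtype.ext h
    have hι : ∃ ι : Bc (k+1) ⟶ X (k+1), Function.Injective ι ∧
        Set.range ι = Set.range (d (k+1)) := by
      rcases Nat.lt_or_ge (k+1) n with hk2 | hk2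
      · rw [hBcmid (k+1) (by omega) hk2]
        refine ⟨ModuleCat.ofHom (LinearMap.range ((d (k+1)).hom : ↥(X (k+2)) →ₗ[R] ↥(X (k+1)))).subtype,
          Subtype.coe_injective, ?_⟩
        ext y
        constructor
        · rintro ⟨⟨z, hz⟩, rfl⟩
          exact hz
        · rintro ⟨u, rfl⟩
          exact ⟨⟨d (k+1) u, ⟨u, rfl⟩⟩, rfl⟩
      · have hkn : k + 1 = n := by omega
        subst hkn
        rw [hBcn (k+1) le_rfl]
        refine ⟨en.inv ≫ d (k+1), inj_comp (iso_bij en.symm).1 hdinj, ?_⟩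
        ext y
        constructor
        · rintro ⟨z, rfl⟩
          exact ⟨en.inv z, rfl⟩
        · rintro ⟨u, rfl⟩
          refine ⟨en.hom u, ?_⟩
          show d (k+1) (en.inv (en.hom u)) = d (k+1) u
          rw [hom_inv_apply en u]
    obtain ⟨π, hπs, hπk⟩ := hπ
    obtain ⟨ι, hιi, hιr⟩ := hι
    refine ⟨ι, π, hιi, hπs, ?_⟩
    intro y
    rw [hπk y, hexk y, hιr]
  -- presentations of the boundary modules
  set W : ℕ → ModuleCat.{u} R := fun j =>
    if j = 0 ∨ n ≤ j then K
    else ModuleCat.of R ↥(LinearMap.ker (Finsupp.linearCombination R (id : ↥(Bc j) → ↥(Bc j)))) with hWdef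
  have hW0 : W 0 = K := if_pos (Or.inl rfl)
  have hWn : ∀ j, n ≤ j → W j = K := fun j h => if_pos (Or.inr h)
  have hPres : ∀ j, j ≤ n → ∃ (T : ModuleCat.{u} R) (p : T ⟶ Bc j) (jm : W j ⟶ T),
      Projective T ∧ Function.Surjective p ∧ Function.Injective jm ∧ Function.Exact jm p := by
    intro j hj
    by_cases hcase : j = 0 ∨ n ≤ j
    · have hBj : Bc j = M := if_pos hcase
      have hWj : W j = K := if_pos hcase
      rw [hBj, hWj]
      exact ⟨P, g, f, hP, hg, hf, hfg⟩
    · have hWj : W j = ModuleCat.of R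
          ↥(LinearMap.ker (Finsupp.linearCombination R (id : ↥(Bc j) → ↥(Bc j)))) :=
        if_neg hcase
      rw [hWj]
      refine ⟨ModuleCat.of R (↥(Bc j) →₀ R),
        ModuleCat.ofHom (Finsupp.linearCombination R (id : ↥(Bc j) → ↥(Bc j))),
        ModuleCat.ofHom (LinearMap.ker (Finsupp.linearCombination R (id : ↥(Bc j) → ↥(Bc j)))).subtype,
        projective_of_moduleProjective inferInstance,
        Finsupp.linearCombination_id_surjective R ↥(Bc j),
        Subtype.coe_injective, ?_⟩
      intro x
      constructor
      · intro hx
        exact ⟨⟨x, hx⟩, rfl⟩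
      · rintro ⟨⟨y, hy⟩, rfl⟩
        exact hy
  -- horseshoe at each level
  have hHS : ∀ k, k < n → ∃ (Vk : ModuleCat.{u} R) (α : W (k+1) ⟶ Vk) (β : Vk ⟶ W k),
      Function.Injective α ∧ Function.Surjective β ∧ Function.Exact α β ∧
        HasPdLE R Vk (m-1) := by
    intro k hk
    obtain ⟨ι, π, hιi, hπs, hexι⟩ := hSES k hk
    obtain ⟨TA, pA, jA, hTA, hpA, hjA, hexA⟩ := hPres (k+1) (by omega)
    obtain ⟨TC, pC, jC, hTC, hpC, hjC, hexC⟩ := hPres k (by omega)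
    have hπALLsurj : Function.Surjective π := hπs
    obtain ⟨Vk, α, β, hα, hβ, hαβ, S, km, qm, hSproj, hkm, hqm, hkqm⟩ :=
      horseshoe ι π hιi hπs hexι pA jA hTA hpA hjA hexA pC jC hTC hpC hjC hexC
    refine ⟨Vk, α, β, hα, hβ, hαβ, ?_⟩
    exact pd_kernel hm (hpd (k+1) (by omega) (by omega)) hSproj km qm hkm hqm hkqm
  choose Vf αf βf hαi hβs hαβe hVpd using hHS
  set Vt : ℕ → ModuleCat.{u} R := fun j => match j with
    | 0 => K
    | (j+1) => if h : j < n then Vf j h else K with hVtdef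
  have hVt : ∀ j (h : j < n), Vt (j+1) = Vf j h := fun j h => dif_pos h
  have hVtn : Vt (n+1) = K := dif_neg (lt_irrefl n)
  have hsplice := splice (R := R) n hn (m-1) W Vt ?_ ?_
  · obtain ⟨Xs, ds, ⟨i0⟩, ⟨itop⟩, hpd', hex'⟩ := hsplice
    rw [hW0] at i0
    rw [hVtn] at itop
    exact ⟨Xs, ds, ⟨i0⟩, ⟨itop⟩, hpd', hex'⟩
  · -- the β-package
    intro k hk
    rcases Nat.lt_or_ge k n with hlt | hge
    · rw [hVt k hlt]
      refine ⟨βf k hlt, hβs k hlt, fun _ => ⟨αf k hlt, hαi k hlt, hαβe k hlt⟩,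
        fun heq => absurd heq (Nat.ne_of_lt hlt)⟩
    · have hkn : k = n := by omega
      subst hkn
      rw [hVtn, hWn k le_rfl]
      exact ⟨𝟙 K, Function.surjective_id, fun hlt => absurd hlt (lt_irrefl k),
        fun _ => Function.injective_id⟩
  · -- the pd-package
    intro k h1 h2
    obtain ⟨j, rfl⟩ : ∃ j, k = j + 1 := ⟨k - 1, by omega⟩
    rw [hVt j (by omega)]
    exact hVpd j (by omega)

end SGAux
namespace SGAux
open CategoryTheory Limits

section ZHelpers
universe v' u'
variable {S' : Type v'} [Ring S']

lemma iso_bij' {A B : ModuleCat.{u'} S'} (e : A ≅ B) : Function.Bijective e.hom := by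
  constructor
  · intro a b h
    have h1 : e.inv (e.hom a) = a := congrArg (fun φ : A ⟶ A => φ a) e.hom_inv_id
    have h2 : e.inv (e.hom b) = b := congrArg (fun φ : A ⟶ A => φ b) e.hom_inv_id
    rw [← h1, ← h2, h]
  · intro b
    exact ⟨e.inv b, congrArg (fun φ : B ⟶ B => φ b) e.inv_hom_id⟩

lemma subsingleton_of_iso' {A B : ModuleCat.{u'} S'} (e : A ≅ B) (h : Subsingleton ↥A) :
    Subsingleton ↥B := by
  constructor
  intro x y
  have h1 : e.hom (e.inv x) = x := congrArg (fun φ : B ⟶ B => φ x) e.inv_hom_id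
  have h2 : e.hom (e.inv y) = y := congrArg (fun φ : B ⟶ B => φ y) e.inv_hom_id
  rw [← h1, ← h2, Subsingleton.elim (e.inv x) (e.inv y)]

lemma subsingleton_of_isZero {A : ModuleCat.{u'} S'} (h : IsZero A) : Subsingleton ↥A := by
  constructor
  intro x y
  have hid : 𝟙 A = (0 : A ⟶ A) := h.eq_of_src _ _
  have hx : x = (0 : A ⟶ A) x := by
    conv_lhs => rw [show x = (𝟙 A) x from rfl, hid]
  have hy : y = (0 : A ⟶ A) y := by
    conv_lhs => rw [show y = (𝟙 A) y from rfl, hid]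
  rw [hx, hy]
  rfl

lemma sc_exact_iff (S : ShortComplex (ModuleCat.{u'} S')) :
    S.Exact ↔ Function.Exact S.f S.g := by
  rw [S.moduleCat_exact_iff]
  constructor
  · intro h y
    constructor
    · exact h y
    · rintro ⟨x, rfl⟩
      exact congrArg (fun φ => φ x) S.zero
  · intro h x hx
    exact (h x).mp hx

lemma exact_inj_right' {A B C C' : ModuleCat.{u'} S'} {f : A ⟶ B} {g : B ⟶ C} {e : C ⟶ C'}
    (he : Function.Injective e) (h : Function.Exact f g) : Function.Exact f (g ≫ e) := by
  intro y
  rw [← h y]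
  constructor
  · intro hy
    have : e (g y) = e 0 := by simpa [map_zero] using hy
    exact he this
  · intro hy
    show e (g y) = 0
    rw [hy, map_zero]

end ZHelpers

variable {R : Type u} [Ring R]

lemma ext_part {M K P : ModuleCat.{u} R} (hP : Projective P) (f : K ⟶ P) (g : P ⟶ M)
    (hf : Function.Injective f) (hg : Function.Surjective g) (hfg : Function.Exact f g)
    (i : ℕ) (hi : 1 ≤ i) (Q : ModuleCat.{u} R)
    (hext : Subsingleton (extGroup R (i+1) M Q)) :
    Subsingleton (extGroup R i K Q) := by
  obtain ⟨i', rfl⟩ : ∃ i', i = i' + 1 := ⟨i - 1, by omega⟩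
  obtain ⟨resK⟩ := (HasProjectiveResolution.out (Z := K))
  set eK := HomologicalComplex.singleObjXSelf (ComplexShape.down ℕ) 0 K with heKdef
  set π0K : resK.complex.X 0 ⟶ K := resK.π.f 0 ≫ eK.hom with hπ0Kdef
  have hπ0Ksurj : Function.Surjective π0K := by
    have hepi : Epi (resK.π.f 0) := inferInstance
    exact surj_comp ((ModuleCat.epi_iff_surjective _).mp hepi) (iso_bij' eK).2
  have hex0 : Function.Exact (resK.complex.d 1 0) π0K :=
    exact_inj_right' (iso_bij' eK).1 ((sc_exact_iff _).mp resK.exact₀)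
  -- the prepended complex computing a resolution of M
  set XM : ℕ → ModuleCat.{u} R := fun j => match j with
    | 0 => P
    | (j+1) => resK.complex.X j with hXMdef
  set dM : ∀ j, XM (j+1) ⟶ XM j := fun j => match j with
    | 0 => π0K ≫ f
    | (j+1) => resK.complex.d (j+1) j with hdMdef
  have hdd : ∀ j, dM (j+1) ≫ dM j = 0 := by
    intro j
    match j with
    | 0 =>
      show resK.complex.d 1 0 ≫ (π0K ≫ f) = 0
      apply ModuleCat.hom_ext
      apply LinearMap.ext
      intro x
      show f (π0K (resK.complex.d 1 0 x)) = 0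
      rw [hex0.apply_apply_eq_zero x, map_zero]
    | (j+1) =>
      show resK.complex.d (j+2) (j+1) ≫ resK.complex.d (j+1) j = 0
      exact resK.complex.d_comp_d _ _ _
  set CM : ChainComplex (ModuleCat.{u} R) ℕ := ChainComplex.of XM dM hdd with hCMdef
  have hCMd0 : CM.d 1 0 = π0K ≫ f := by simp [CM, dM, ChainComplex.of.d]
  have hCMds : ∀ j, CM.d (j+2) (j+1) = resK.complex.d (j+1) j :=
    fun j => by simp [CM, dM, ChainComplex.of.d]
  have hw : CM.d 1 0 ≫ g = 0 := by
    rw [hCMd0]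
    apply ModuleCat.hom_ext
    apply LinearMap.ext
    intro x
    show g (f (π0K x)) = 0
    rw [hfg.apply_apply_eq_zero _]
  set πM : CM ⟶ (ChainComplex.single₀ (ModuleCat.{u} R)).obj M :=
    (ChainComplex.toSingle₀Equiv CM M).symm ⟨g, hw⟩ with hπMdef
  have hπMf0 : πM.f 0 = g := by
    rw [hπMdef]
    exact ChainComplex.toSingle₀Equiv_symm_apply_f_zero (C := CM) (X := M) g hw
  have hCMexact : ∀ j, CM.ExactAt (j+1) := by
    intro j
    rw [HomologicalComplex.exactAt_iff' CM (j+2) (j+1) j (by simp) (by simp), sc_exact_iff]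
    match j with
    | 0 =>
      show Function.Exact (CM.d 2 1) (CM.d 1 0)
      rw [hCMds 0, hCMd0]
      exact exact_inj_right' hf hex0
    | (j+1) =>
      show Function.Exact (CM.d (j+3) (j+2)) (CM.d (j+2) (j+1))
      rw [hCMds (j+1), hCMds j]
      exact (sc_exact_iff _).mp (resK.exact_succ j)
  have hquasi : QuasiIso πM := by
    constructor
    intro n
    match n with
    | 0 =>
      rw [ChainComplex.quasiIsoAt₀_iff, ShortComplex.quasiIso_iff_of_zeros']
      · constructor
        · rw [sc_exact_iff]
          show Function.Exact (CM.d 1 0) (πM.f 0)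
          rw [hCMd0, hπMf0]
          exact exact_surj_left hπ0Ksurj hfg
        · show Epi (πM.f 0)
          rw [hπMf0]
          exact (ModuleCat.epi_iff_surjective g).mpr hg
      all_goals rfl
    | (n+1) =>
      rw [quasiIsoAt_iff_exactAt' πM (n+1) (ChainComplex.exactAt_succ_single_obj _ _)]
      exact hCMexact n
  let resM : ProjectiveResolution M :=
    { complex := CM
      projective := fun n => match n with
        | 0 => hP
        | (n+1) => resK.projective n
      π := πM
      quasiIso := hquasi }
  -- homology juggling
  set YM := CM.linearYonedaObj ℤ Q with hYMdef
  set YK := resK.complex.linearYonedaObj ℤ Q with hYKdef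
  have hiso1 : extGroup R (i'+2) M Q ≅ YM.homology (i'+2) := resM.isoExt (i'+2) Q
  have hz : IsZero (YM.homology (i'+2)) := by
    have hsub : Subsingleton ↥(YM.homology (i'+2)) := subsingleton_of_iso' hiso1 hext
    exact ModuleCat.isZero_of_subsingleton _
  have hMex : YM.ExactAt (i'+2) := (HomologicalComplex.exactAt_iff_isZero_homology _ _).mpr hz
  rw [HomologicalComplex.exactAt_iff' YM (i'+1) (i'+2) (i'+3) (by simp) (by simp),
    sc_exact_iff] at hMex
  have hMex' : Function.Exact ⇑(YM.d (i'+1) (i'+2)) ⇑(YM.d (i'+2) (i'+3)) := hMex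
  have hmap1 : YM.d (i'+1) (i'+2) = YK.d i' (i'+1) := by
    show (CM.linearYonedaObj ℤ Q).d (i'+1) (i'+2) =
      (resK.complex.linearYonedaObj ℤ Q).d i' (i'+1)
    simp [ChainComplex.linearYonedaObj, hCMds]
    rfl
  have hmap2 : YM.d (i'+2) (i'+3) = YK.d (i'+1) (i'+2) := by
    show (CM.linearYonedaObj ℤ Q).d (i'+2) (i'+3) =
      (resK.complex.linearYonedaObj ℤ Q).d (i'+1) (i'+2)
    simp [ChainComplex.linearYonedaObj, hCMds]
    rfl
  have hKex : YK.ExactAt (i'+1) := by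
    rw [HomologicalComplex.exactAt_iff' YK i' (i'+1) (i'+2) (by simp) (by simp), sc_exact_iff]
    show Function.Exact (YK.d i' (i'+1)) (YK.d (i'+1) (i'+2))
    rw [← hmap1, ← hmap2]
    exact hMex'
  have hzK : IsZero (YK.homology (i'+1)) :=
    (HomologicalComplex.exactAt_iff_isZero_homology _ _).mp hKex
  have hiso2 : extGroup R (i'+1) K Q ≅ YK.homology (i'+1) := resK.isoExt (i'+1) Q
  exact subsingleton_of_iso' hiso2.symm (subsingleton_of_isZero hzK)

end SGAux


/-- if `M` is `(n,m)`-SG-projective (`m ≥ 1`) and `0 → K → P → M → 0` is exact with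
`P` projective, then the first syzygy `K` is `(n, m-1)`-SG-projective. -/
theorem firstSyzygy_sgProjective {R : Type u} [Ring R] (n m : ℕ) (hn : 1 ≤ n) (hm : 1 ≤ m)
    (M K P : ModuleCat.{u} R) (hM : IsSGProjective R n m M) (hP : Projective P)
    (f : K ⟶ P) (g : P ⟶ M) (hf : Function.Injective f) (hg : Function.Surjective g)
    (hfg : Function.Exact f g) : IsSGProjective R n (m - 1) K := by
  obtain ⟨⟨X, d, ⟨e0⟩, ⟨en⟩, hpd, hdinj, hdsurj, hdex⟩, hext⟩ := hM
  constructor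
  · exact SGAux.existence_part n m hn hm M K P hP f g hf hg hfg X d e0 en hpd hdinj hdsurj hdex
  · intro i hi Q hQ
    apply SGAux.ext_part hP f g hf hg hfg i (by omega) Q
    exact hext (i+1) (by omega) Q hQ
end

section
/- If M is an (n,0)-SG-projective module which is not projective and Q is any module with pd(Q) ≤ m, then M ⊕ Q is an (n,m)-SG-projective module; moreover if pd(M) = ∞ then pd(M ⊕ Q) = ∞. -/
/- Formalization preliminaries: exact sequences of modules, projective/flat/Gorenstein
projective dimensions, (n,m)-strongly Gorenstein projective modules. -/

open CategoryTheory

universe u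

variable (R : Type u) [Ring R]

namespace SGAux
open CategoryTheory

universe v
variable {R : Type v} [Ring R]

lemma projective_of_mod (A : ModuleCat.{v} R) (h : Module.Projective R A) : Projective A :=
  Projective.of_iso (Iso.refl A) ((IsProjective.iff_projective (A : Type v)).mp h)

lemma mod_of_projective (A : ModuleCat.{v} R) (h : Projective A) : Module.Projective R A :=
  (IsProjective.iff_projective (A : Type v)).mpr (Projective.of_iso (Iso.refl A).symm h)

lemma pd_iso {A B : ModuleCat.{v} R} (e : A ≅ B) {m : ℕ} (h : HasPdLE R A m) :
    HasPdLE R B m := by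
  obtain ⟨X, d, ⟨e0⟩, hproj, hex⟩ := h
  exact ⟨X, d, ⟨e0 ≪≫ e⟩, hproj, hex⟩

lemma projective_of_pd0 {A : ModuleCat.{v} R} (h : HasPdLE R A 0) : Projective A := by
  obtain ⟨X, d, ⟨e0⟩, hproj, hinj, hsurj, -⟩ := h
  have : Projective (X 1) := hproj 1 le_rfl le_rfl
  exact Projective.of_iso ((LinearEquiv.ofBijective (d 0).hom ⟨hinj, hsurj⟩).toModuleIso ≪≫ e0) this

lemma pd_of_projective {A : ModuleCat.{v} R} (h : Projective A) (m : ℕ) : HasPdLE R A m := by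
  classical
  refine ⟨fun j => match j with
    | 0 => A
    | 1 => A
    | (_+2) => ModuleCat.of R PUnit,
    fun j => match j with
    | 0 => 𝟙 A
    | 1 => 0
    | (_+2) => 0, ⟨Iso.refl A⟩, ?_, ?_⟩
  · rintro (_|_|i) h1 h2
    · omega
    · exact h
    · exact projective_of_mod _ inferInstance
  · refine ⟨?_, ?_, ?_⟩
    · match m with
      | 0 => exact fun a b hab => hab
      | 1 => exact fun (a b : PUnit) _ => Subsingleton.elim a b
      | (k+2) => exact fun (a b : PUnit) _ => Subsingleton.elim a b
    · exact fun a => ⟨a, rfl⟩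
    · rintro (_|i) hi
      · intro (y : A)
        constructor
        · intro hy
          exact ⟨0, by simpa using hy.symm⟩
        · rintro ⟨x, rfl⟩
          show (0 : _ →ₗ[R] _) x = 0
          simp
      · intro (y : PUnit)
        have hy : y = 0 := Subsingleton.elim _ _
        subst hy
        constructor
        · intro _
          exact ⟨0, by simp⟩
        · intro _
          cases i <;> rfl
end SGAux

namespace SGAux
open CategoryTheory

universe v
variable {R : Type v} [Ring R]

lemma inj_prodMap {M₁ M₂ N₁ N₂ : Type v} [AddCommGroup M₁] [AddCommGroup M₂] [AddCommGroup N₁]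
    [AddCommGroup N₂] [Module R M₁] [Module R M₂] [Module R N₁] [Module R N₂]
    {f : M₁ →ₗ[R] M₂} {g : N₁ →ₗ[R] N₂} (hf : Function.Injective f)
    (hg : Function.Injective g) : Function.Injective (f.prodMap g) := by
  rintro ⟨a, b⟩ ⟨c, d⟩ h
  rw [Prod.ext_iff] at h ⊢
  simp only [LinearMap.prodMap_apply] at h
  exact ⟨hf h.1, hg h.2⟩

lemma surj_prodMap {M₁ M₂ N₁ N₂ : Type v} [AddCommGroup M₁] [AddCommGroup M₂] [AddCommGroup N₁]
    [AddCommGroup N₂] [Module R M₁] [Module R M₂] [Module R N₁] [Module R N₂]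
    {f : M₁ →ₗ[R] M₂} {g : N₁ →ₗ[R] N₂} (hf : Function.Surjective f)
    (hg : Function.Surjective g) : Function.Surjective (f.prodMap g) := by
  rintro ⟨a, b⟩
  obtain ⟨x, rfl⟩ := hf a
  obtain ⟨y, rfl⟩ := hg b
  exact ⟨(x, y), rfl⟩

lemma exact_prodMap {M₁ M₂ M₃ N₁ N₂ N₃ : Type v} [AddCommGroup M₁] [AddCommGroup M₂]
    [AddCommGroup M₃] [AddCommGroup N₁] [AddCommGroup N₂] [AddCommGroup N₃]
    [Module R M₁] [Module R M₂] [Module R M₃] [Module R N₁] [Module R N₂] [Module R N₃]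
    {f : M₁ →ₗ[R] M₂} {f' : M₂ →ₗ[R] M₃} {g : N₁ →ₗ[R] N₂} {g' : N₂ →ₗ[R] N₃}
    (hf : Function.Exact f f') (hg : Function.Exact g g') :
    Function.Exact (f.prodMap g) (f'.prodMap g') := by
  rintro ⟨x, y⟩
  constructor
  · intro h
    rw [Prod.ext_iff] at h
    simp only [LinearMap.prodMap_apply] at h
    obtain ⟨a, ha⟩ := (hf x).mp h.1
    obtain ⟨b, hb⟩ := (hg y).mp h.2
    exact ⟨(a, b), by simp [LinearMap.prodMap_apply, ha, hb]⟩
  · rintro ⟨⟨a, b⟩, h⟩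
    rw [← h]
    simp only [LinearMap.prodMap_apply, Prod.mk_eq_zero]
    exact ⟨hf.apply_apply_eq_zero a, hg.apply_apply_eq_zero b⟩

lemma pd_prod {A B : ModuleCat.{v} R} {m : ℕ} (hA : HasPdLE R A m) (hB : HasPdLE R B m) :
    HasPdLE R (ModuleCat.of R (A × B)) m := by
  obtain ⟨X, dX, ⟨eX⟩, hXp, hXi, hXs, hXe⟩ := hA
  obtain ⟨Y, dY, ⟨eY⟩, hYp, hYi, hYs, hYe⟩ := hB
  refine ⟨fun j => ModuleCat.of R (X j × Y j),
    fun j => (ModuleCat.ofHom (LinearMap.prodMap (dX j).hom (dY j).hom) :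
      ModuleCat.of R (X (j+1) × Y (j+1)) ⟶ ModuleCat.of R (X j × Y j)),
    ⟨(eX.toLinearEquiv.prodCongr eY.toLinearEquiv).toModuleIso⟩, ?_, ?_, ?_, ?_⟩
  · intro j h1 h2
    letI h1' := mod_of_projective _ (hXp j h1 h2)
    letI h2' := mod_of_projective _ (hYp j h1 h2)
    letI : Module.Projective R (↑(X j) × ↑(Y j)) := inferInstance
    exact projective_of_mod _ this
  · exact inj_prodMap hXi hYi
  · exact surj_prodMap hXs hYs
  · exact fun i hi => exact_prodMap (hXe i hi) (hYe i hi)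

end SGAux

namespace SGAux
open CategoryTheory

universe v
variable {R : Type v} [Ring R]

/-- canonical free cover -/
noncomputable def cover (A : ModuleCat.{v} R) : ModuleCat.{v} R := ModuleCat.of R (↑A →₀ R)

noncomputable def coverMap (A : ModuleCat.{v} R) : cover A ⟶ A :=
  ModuleCat.ofHom (Finsupp.linearCombination R (id : ↑A → ↑A) : (↑A →₀ R) →ₗ[R] ↑A)

lemma coverMap_surjective (A : ModuleCat.{v} R) : Function.Surjective (coverMap A) := by
  intro a
  refine ⟨Finsupp.single a 1, ?_⟩
  show (Finsupp.linearCombination R (id : ↑A → ↑A)) (Finsupp.single a 1) = a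
  rw [Finsupp.linearCombination_single, one_smul, id]

lemma cover_projective (A : ModuleCat.{v} R) : Projective (cover A) := by
  have : Module.Projective R (↑A →₀ R) := inferInstance
  exact projective_of_mod _ this

lemma exact_subtype_comp {F B G : ModuleCat.{v} R} (f : F ⟶ B)
    (g : G →ₗ[R] (LinearMap.ker f.hom)) (hg : Function.Surjective g) :
    Function.Exact ((ModuleCat.ofHom ((LinearMap.ker f.hom).subtype.comp g) : G ⟶ F)) f := by
  intro y
  constructor
  · intro hy
    obtain ⟨x, hx⟩ := hg ⟨y, hy⟩
    exact ⟨x, congrArg Subtype.val hx⟩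
  · rintro ⟨x, rfl⟩
    exact (g x).2

lemma exact_injComp {M₁ M₂ M₃ N : Type v} [AddCommGroup M₁] [AddCommGroup M₂] [AddCommGroup M₃]
    [AddCommGroup N] [Module R M₁] [Module R M₂] [Module R M₃] [Module R N]
    {g : M₁ →ₗ[R] M₂} {f : M₂ →ₗ[R] M₃} (h : Function.Exact g f)
    {ι : M₃ →ₗ[R] N} (hι : Function.Injective ι) : Function.Exact g (ι.comp f) := by
  intro y
  rw [← h y]
  constructor
  · intro hy
    exact hι (by simpa using hy)
  · intro hy
    simp [LinearMap.comp_apply, hy]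

/-- augment a projective resolution of `ker π` to one of `A`. -/
noncomputable def augRes {F A : ModuleCat.{v} R} (π : F ⟶ A) (hπ : Function.Surjective π)
    (hF : Projective F) (res : ProjRes R (ModuleCat.of R (LinearMap.ker π.hom))) :
    ProjRes R A where
  P := fun j => match j with
    | 0 => F
    | j+1 => res.P j
  d := fun j => match j with
    | 0 => (ModuleCat.ofHom ((LinearMap.ker π.hom).subtype.comp (res.π.hom : res.P 0 →ₗ[R] (LinearMap.ker π.hom))) :
        res.P 0 ⟶ F)
    | j+1 => res.d j
  π := π
  projective := fun j => match j with
    | 0 => hF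
    | j+1 => res.projective j
  surj := hπ
  exact₀ := exact_subtype_comp π _ res.surj
  exact := fun j => match j with
    | 0 => exact_injComp res.exact₀ (Submodule.injective_subtype _)
    | j+1 => res.exact j

/-- canonical free resolution -/
noncomputable def freeK (A : ModuleCat.{v} R) : ℕ → ModuleCat.{v} R
  | 0 => A
  | j+1 => ModuleCat.of R (LinearMap.ker (coverMap (freeK A j)).hom)

noncomputable def freeRes (A : ModuleCat.{v} R) : ProjRes R A where
  P := fun j => cover (freeK A j)
  d := fun j => (ModuleCat.ofHom ((LinearMap.ker (coverMap (freeK A j)).hom).subtype.comp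
      ((coverMap (freeK A (j+1))).hom : cover (freeK A (j+1)) →ₗ[R]
        (LinearMap.ker (coverMap (freeK A j)).hom))) : cover (freeK A (j+1)) ⟶ cover (freeK A j))
  π := coverMap A
  projective := fun j => cover_projective _
  surj := coverMap_surjective A
  exact₀ := exact_subtype_comp (coverMap A) _ (coverMap_surjective (freeK A 1))
  exact := fun j => exact_injComp
    (exact_subtype_comp (coverMap (freeK A (j+1))) _ (coverMap_surjective (freeK A (j+2))))
    (Submodule.injective_subtype _)

/-- product of projective resolutions -/
noncomputable def prodRes {A B : ModuleCat.{v} R} (rA : ProjRes R A) (rB : ProjRes R B) :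
    ProjRes R (ModuleCat.of R (A × B)) where
  P := fun j => ModuleCat.of R (rA.P j × rB.P j)
  d := fun j => (ModuleCat.ofHom (LinearMap.prodMap (rA.d j).hom (rB.d j).hom) :
    ModuleCat.of R (rA.P (j+1) × rB.P (j+1)) ⟶ ModuleCat.of R (rA.P j × rB.P j))
  π := (ModuleCat.ofHom (LinearMap.prodMap (rA.π.hom) (rB.π.hom)) : ModuleCat.of R (rA.P 0 × rB.P 0) ⟶ _)
  projective := fun j => by
    letI := mod_of_projective _ (rA.projective j)
    letI := mod_of_projective _ (rB.projective j)
    letI : Module.Projective R (↑(rA.P j) × ↑(rB.P j)) := inferInstance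
    exact projective_of_mod _ this
  surj := surj_prodMap rA.surj rB.surj
  exact₀ := exact_prodMap rA.exact₀ rB.exact₀
  exact := fun j => exact_prodMap (rA.exact j) (rB.exact j)

end SGAux

namespace SGAux
open CategoryTheory

universe v
variable {R : Type v} [Ring R]

/-- trivial resolution of a projective module -/
noncomputable def projRes {A : ModuleCat.{v} R} (hA : Projective A) : ProjRes R A where
  P := fun j => match j with
    | 0 => A
    | _+1 => ModuleCat.of R PUnit
  d := fun j => match j with
    | 0 => 0
    | _+1 => 0
  π := 𝟙 A
  projective := fun j => match j with
    | 0 => hA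
    | _+1 => projective_of_mod _ inferInstance
  surj := fun a => ⟨a, rfl⟩
  exact₀ := by
    intro y
    constructor
    · intro hy
      refine ⟨0, ?_⟩
      rw [map_zero]
      exact hy.symm
    · rintro ⟨x, rfl⟩
      have hx : x = 0 := Subsingleton.elim (α := PUnit.{v+1}) x 0
      rw [hx, map_zero, map_zero]
  exact := by
    intro j y
    constructor
    · intro _
      refine ⟨0, ?_⟩
      exact Subsingleton.elim (α := PUnit.{v+1}) _ _
    · intro _
      have hy : y = 0 := Subsingleton.elim (α := PUnit.{v+1}) y 0
      rw [hy, map_zero]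

lemma projRes_subsingleton {A : ModuleCat.{v} R} (hA : Projective A) (j : ℕ) (hj : 0 < j) :
    Subsingleton ((projRes hA).P j) := by
  match j, hj with
  | (j+1), _ => exact inferInstanceAs (Subsingleton PUnit)

lemma resOfPd : ∀ (m : ℕ) (A : ModuleCat.{v} R), HasPdLE R A m →
    ∃ res : ProjRes R A, ∀ j, m < j → Subsingleton (res.P j) := by
  intro m
  induction m with
  | zero =>
    intro A hA
    exact ⟨projRes (projective_of_pd0 hA), fun j hj => projRes_subsingleton _ j hj⟩
  | succ m ih =>
    intro A hA
    obtain ⟨X, d, ⟨e⟩, hproj, hinj, hsurj, hexact⟩ := hA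
    set π : X 1 ⟶ A := d 0 ≫ e.hom with hπ
    have hbij : Function.Bijective (e.hom) :=
      ConcreteCategory.bijective_of_isIso e.hom
    have hπs : Function.Surjective π := by
      have hc : ⇑π = ⇑e.hom ∘ ⇑(d 0) := rfl
      rw [hc]
      exact hbij.2.comp hsurj
    have heinj : Function.Injective (e.hom) := hbij.1
    have hker : ∀ x : X 1, π x = 0 ↔ d 0 x = 0 := by
      intro x
      constructor
      · intro hx
        apply heinj
        rw [map_zero]; exact hx
      · intro hx
        show e.hom (d 0 x) = 0
        rw [hx]
        simp
    -- the kernel has projective dimension ≤ m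
    have hK : HasPdLE R (ModuleCat.of R (LinearMap.ker π.hom)) m := by
      have hd10 : ∀ x : X 2, π (d 1 x) = 0 := by
        intro x
        rw [hker]
        exact (hexact 0 (Nat.succ_pos m)).apply_apply_eq_zero x
      refine ⟨fun j => match j with
        | 0 => ModuleCat.of R (LinearMap.ker π.hom)
        | j+1 => X (j+2),
        fun j => match j with
        | 0 => (ModuleCat.ofHom (LinearMap.codRestrict (LinearMap.ker π.hom) (d 1).hom hd10) :
            X 2 ⟶ ModuleCat.of R (LinearMap.ker π.hom))
        | j+1 => d (j+2),
        ⟨Iso.refl _⟩, ?_, ?_, ?_, ?_⟩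
      · intro j h1 h2
        match j, h1 with
        | (j+1), _ => exact hproj (j+2) (by omega) (by omega)
      · -- injectivity of the top map
        match m with
        | 0 =>
          intro x y hxy
          have : d 1 x = d 1 y := congrArg Subtype.val hxy
          exact hinj this
        | (k+1) => exact hinj
      · -- surjectivity onto the kernel
        rintro ⟨y, hy⟩
        have hy' : (d 0) y = 0 := (hker y).mp hy
        obtain ⟨x, hx⟩ := (hexact 0 (Nat.succ_pos m) y).mp hy'
        exact ⟨x, Subtype.ext hx⟩
      · intro i hi
        match i with
        | 0 =>
          intro y
          show (LinearMap.codRestrict (LinearMap.ker π.hom) (d 1).hom hd10) y = 0 ↔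
            y ∈ Set.range ⇑(d 2)
          constructor
          · intro h
            exact (hexact 1 (by omega) y).mp (congrArg Subtype.val h)
          · intro h
            exact Subtype.ext ((hexact 1 (by omega) y).mpr h)
        | (i+1) => exact hexact (i+2) (by omega)
    obtain ⟨resK, hresK⟩ := ih _ hK
    refine ⟨augRes π hπs (hproj 1 (by omega) (by omega)) resK, ?_⟩
    intro j hj
    match j, hj with
    | (j+1), hj => exact hresK j (by omega)

end SGAux

namespace SGAux
open CategoryTheory

universe v
variable {R : Type v} [Ring R]

noncomputable def cpx {A : ModuleCat.{v} R} (res : ProjRes R A) :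
    ChainComplex (ModuleCat.{v} R) ℕ :=
  ChainComplex.of res.P res.d
    (fun n => ModuleCat.hom_ext (LinearMap.ext fun x => (res.exact n).apply_apply_eq_zero x))

lemma cpx_d {A : ModuleCat.{v} R} (res : ProjRes R A) (j : ℕ) :
    (cpx res).d (j+1) j = res.d j :=
  ChainComplex.of_d _ _ j

/-- build a mathlib `ProjectiveResolution` from a `ProjRes`. -/
noncomputable def toRes {A : ModuleCat.{v} R} (res : ProjRes R A) :
    ProjectiveResolution A where
  complex := cpx res
  projective := fun n => res.projective n
  π := (ChainComplex.toSingle₀Equiv _ _).symm ⟨(res.π : (cpx res).X 0 ⟶ A), by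
    have h10 : (cpx res).d 1 0 = res.d 0 := cpx_d res 0
    rw [h10]
    exact ModuleCat.hom_ext (LinearMap.ext fun x => res.exact₀.apply_apply_eq_zero x)⟩
  quasiIso := ⟨fun n => by
    cases n with
    | zero =>
      rw [ChainComplex.quasiIsoAt₀_iff, ShortComplex.quasiIso_iff_of_zeros']
      · refine (ShortComplex.exact_and_epi_g_iff_of_iso
          (S₂ := ShortComplex.mk (res.d 0 : (cpx res).X 1 ⟶ (cpx res).X 0)
            (res.π : (cpx res).X 0 ⟶ A)
            (ModuleCat.hom_ext (LinearMap.ext fun x => res.exact₀.apply_apply_eq_zero x))) ?_).2 ⟨?_, ?_⟩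
        · refine ShortComplex.isoMk (Iso.refl _) (Iso.refl _) (Iso.refl _) ?_ ?_
          · have h10 : (cpx res).d 1 0 = res.d 0 := cpx_d res 0
            simp [h10]
            rfl
          · simp [ChainComplex.toSingle₀Equiv_symm_apply_f_zero]
            rfl
        · rw [ShortComplex.moduleCat_exact_iff]
          intro x₂ hx₂
          exact (res.exact₀ x₂).mp hx₂
        · exact (ModuleCat.epi_iff_surjective _).mpr res.surj
      all_goals rfl
    | succ n =>
      rw [quasiIsoAt_iff_exactAt']
      · rw [HomologicalComplex.exactAt_iff' _ (n+2) (n+1) n (by simp) (by simp)]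
        rw [ShortComplex.moduleCat_exact_iff]
        intro x₂ hx₂
        have hx₂' : res.d n x₂ = 0 := by
          have h : (HomologicalComplex.sc' (cpx res) (n+2) (n+1) n).g = res.d n := cpx_d res n
          rw [h] at hx₂
          exact hx₂
        obtain ⟨x₁, hx₁⟩ := (res.exact n x₂).mp hx₂'
        refine ⟨x₁, ?_⟩
        have h : (HomologicalComplex.sc' (cpx res) (n+2) (n+1) n).f = res.d (n+1) :=
          cpx_d res (n+1)
        rw [h]
        exact hx₁
      · apply ChainComplex.exactAt_succ_single_obj⟩

lemma subsingleton_of_iso {S : Type*} [Ring S] {G H : ModuleCat S} (e : G ≅ H)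
    (h : Subsingleton H) : Subsingleton G :=
  (Equiv.ofBijective _ (ConcreteCategory.bijective_of_isIso e.hom)).subsingleton_congr.mpr h

lemma subsingleton_of_isZero_s16 {S : Type*} [Ring S] {G : ModuleCat S} (h : Limits.IsZero G) :
    Subsingleton G := by
  constructor
  intro a b
  have h1 : (𝟙 G : G ⟶ G) = 0 := h.eq_of_src _ _
  have ha : (𝟙 G : G ⟶ G) a = (0 : G ⟶ G) a := by rw [h1]
  have hb' : (𝟙 G : G ⟶ G) b = (0 : G ⟶ G) b := by rw [h1]
  show a = b
  calc a = (𝟙 G : G ⟶ G) a := rfl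
    _ = (0 : G ⟶ G) a := ha
    _ = (0 : G ⟶ G) b := rfl
    _ = (𝟙 G : G ⟶ G) b := hb'.symm
    _ = b := rfl

/-- Master lemma: `Ext^{i+1}(A,Y)` vanishes iff cocycles at level `i+1` of the chosen
resolution extend. -/
lemma ext_subsingleton_iff {A Y : ModuleCat.{v} R} (res : ProjRes R A) (i : ℕ) :
    Subsingleton (extGroup R (i+1) A Y) ↔
      (∀ g : res.P (i+1) ⟶ Y, res.d (i+1) ≫ g = 0 →
        ∃ h : res.P i ⟶ Y, res.d i ≫ h = g) := by
  set K := ((toRes res).complex.linearYonedaObj ℤ Y) with hK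
  have e : extGroup R (i+1) A Y ≅ K.homology (i+1) :=
    (toRes res).isoExt (i+1) Y
  have hd : ∀ (j : ℕ) (h : res.P j ⟶ Y),
      K.d j (j+1) h = ((cpx res).d (j+1) j ≫ h) := by
    intro j h
    rfl
  have hzero : Subsingleton (extGroup R (i+1) A Y) ↔ Limits.IsZero (K.homology (i+1)) := by
    constructor
    · intro hs
      have hs' : Subsingleton (K.homology (i+1)) :=
        (Equiv.ofBijective _ (ConcreteCategory.bijective_of_isIso e.hom)).subsingleton_congr.mp hs
      exact ModuleCat.isZero_of_subsingleton _
    · intro hz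
      exact subsingleton_of_iso e (subsingleton_of_isZero_s16 hz)
  rw [hzero, ← HomologicalComplex.exactAt_iff_isZero_homology,
    HomologicalComplex.exactAt_iff' K i (i+1) (i+2) (by simp) (by simp),
    ShortComplex.moduleCat_exact_iff]
  constructor
  · intro hcond g hg
    have hg' : K.d (i+1) ((i+1)+1) g = 0 := by
      rw [hd (i+1) g, cpx_d]
      exact hg
    obtain ⟨h, hh⟩ := hcond g hg'
    refine ⟨h, ?_⟩
    have h1 : K.d i (i+1) h = g := hh
    rw [hd i h, cpx_d] at h1
    exact h1
  · intro hcond g hg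
    have hg2 : K.d (i+1) ((i+1)+1) g = 0 := hg
    rw [hd (i+1) g, cpx_d] at hg2
    obtain ⟨h, hh⟩ := hcond g hg2
    refine ⟨h, ?_⟩
    show K.d i (i+1) h = g
    rw [hd i h, cpx_d]
    exact hh

end SGAux

namespace SGAux
open CategoryTheory

universe v
variable {R : Type v} [Ring R]

/-- Ext vanishing above the projective dimension. -/
lemma ext_vanish_of_pd {A : ModuleCat.{v} R} {m : ℕ} (hA : HasPdLE R A m) :
    ∀ i, m < i → ∀ Y : ModuleCat.{v} R, Subsingleton (extGroup R i A Y) := by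
  obtain ⟨res, hsub⟩ := resOfPd m A hA
  rintro (_|i) hi Y
  · omega
  refine (ext_subsingleton_iff res i).mpr ?_
  intro g hg
  have hsi : Subsingleton (res.P (i+1)) := hsub (i+1) (by omega)
  have hg0 : g = 0 := by
    refine ModuleCat.hom_ext (LinearMap.ext fun x => ?_)
    rw [@Subsingleton.elim _ hsi x 0, map_zero]
    rfl
  exact ⟨0, by rw [hg0, Limits.comp_zero]⟩

/-- Ext of a product vanishes if Ext of the factors vanish. -/
lemma ext_prod_vanish {A B Y : ModuleCat.{v} R} {i : ℕ}
    (hA : Subsingleton (extGroup R (i+1) A Y)) (hB : Subsingleton (extGroup R (i+1) B Y)) :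
    Subsingleton (extGroup R (i+1) (ModuleCat.of R (A × B)) Y) := by
  set rA := freeRes A
  set rB := freeRes B
  refine (ext_subsingleton_iff (prodRes rA rB) i).mpr ?_
  intro g hg
  set gA : rA.P (i+1) ⟶ Y := ModuleCat.ofHom (g.hom.comp (LinearMap.inl R (rA.P (i+1)) (rB.P (i+1)))) with hgA
  set gB : rB.P (i+1) ⟶ Y := ModuleCat.ofHom (g.hom.comp (LinearMap.inr R (rA.P (i+1)) (rB.P (i+1)))) with hgB
  have hcA : rA.d (i+1) ≫ gA = 0 := by
    refine ModuleCat.hom_ext (LinearMap.ext fun x => ?_)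
    have := LinearMap.congr_fun (congrArg ModuleCat.Hom.hom hg) (x, 0)
    show g.hom ((rA.d (i+1) x, 0) : ↑(rA.P (i+1)) × ↑(rB.P (i+1))) = 0
    rw [← map_zero (rB.d (i+1)).hom]
    exact this
  have hcB : rB.d (i+1) ≫ gB = 0 := by
    refine ModuleCat.hom_ext (LinearMap.ext fun x => ?_)
    have := LinearMap.congr_fun (congrArg ModuleCat.Hom.hom hg) (0, x)
    show g.hom ((0, rB.d (i+1) x) : ↑(rA.P (i+1)) × ↑(rB.P (i+1))) = 0
    rw [← map_zero (rA.d (i+1)).hom]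
    exact this
  obtain ⟨hA', hhA⟩ := (ext_subsingleton_iff rA i).mp hA gA hcA
  obtain ⟨hB', hhB⟩ := (ext_subsingleton_iff rB i).mp hB gB hcB
  refine ⟨ModuleCat.ofHom (hA'.hom.comp (LinearMap.fst R _ _) + hB'.hom.comp (LinearMap.snd R _ _)), ?_⟩
  refine ModuleCat.hom_ext (LinearMap.ext fun x => ?_)
  obtain ⟨x1, x2⟩ := x
  have e1 : hA' (rA.d i x1) = gA x1 := LinearMap.congr_fun (congrArg ModuleCat.Hom.hom hhA) x1
  have e2 : hB' (rB.d i x2) = gB x2 := LinearMap.congr_fun (congrArg ModuleCat.Hom.hom hhB) x2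
  have hsplit : ((x1, x2) : ↑(rA.P (i+1)) × ↑(rB.P (i+1))) = (x1, 0) + (0, x2) := by
    simp
  show hA' (rA.d i x1) + hB' (rB.d i x2) = g (x1, x2)
  rw [e1, e2, hgA, hgB]
  show g (x1, 0) + g (0, x2) = g (x1, x2)
  exact ((congrArg g.hom hsplit).trans (map_add g.hom _ _)).symm

/-- Ext of a direct factor vanishes if Ext of the product vanishes. -/
lemma ext_summand {A B Y : ModuleCat.{v} R} {i : ℕ}
    (h : Subsingleton (extGroup R i (ModuleCat.of R (A × B)) Y)) :
    Subsingleton (extGroup R i A Y) := by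
  set F := Ext ℤ (ModuleCat.{v} R) i with hF
  set s : A ⟶ ModuleCat.of R (A × B) := ModuleCat.ofHom (LinearMap.inl R A B) with hs
  set r : ModuleCat.of R (A × B) ⟶ A := ModuleCat.ofHom (LinearMap.fst R A B) with hr
  have hsr : s ≫ r = 𝟙 A := rfl
  have key : (F.map r.op).app Y ≫ (F.map s.op).app Y = 𝟙 _ := by
    rw [← NatTrans.comp_app, ← F.map_comp, ← op_comp, hsr, op_id, F.map_id, NatTrans.id_app]
  constructor
  intro a b
  have h1 : ∀ x : ((F.obj (Opposite.op A)).obj Y),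
      (F.map s.op).app Y ((F.map r.op).app Y x) = x := by
    intro x
    exact congrArg (fun φ : ((F.obj (Opposite.op A)).obj Y) ⟶ ((F.obj (Opposite.op A)).obj Y) =>
      φ x) key
  have h2 : (F.map r.op).app Y a = (F.map r.op).app Y b := @Subsingleton.elim _ h _ _
  exact (h1 a).symm.trans ((congrArg _ h2).trans (h1 b))

end SGAux

namespace SGAux
open CategoryTheory

universe v
variable {R : Type v} [Ring R]

lemma pd_of_ext1 {A : ModuleCat.{v} R}
    (hv : ∀ Y : ModuleCat.{v} R, Subsingleton (extGroup R 1 A Y)) : HasPdLE R A 1 := by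
  set res := freeRes A with hres
  set K := ModuleCat.of R (LinearMap.ker res.π.hom) with hKdef
  have hmem : ∀ x : res.P 1, res.d 0 x ∈ LinearMap.ker res.π.hom :=
    fun x => res.exact₀.apply_apply_eq_zero x
  set g : res.P 1 ⟶ K := ModuleCat.ofHom (LinearMap.codRestrict (LinearMap.ker res.π.hom) (res.d 0).hom hmem) with hgdef
  have hgc : res.d 1 ≫ g = 0 := by
    refine ModuleCat.hom_ext (LinearMap.ext fun x => ?_)
    refine Subtype.ext ?_
    exact (res.exact 0).apply_apply_eq_zero x
  obtain ⟨h, hh⟩ := (ext_subsingleton_iff res 0).mp (hv K) g hgc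
  have hret : ∀ z : LinearMap.ker res.π.hom, h z.val = z := by
    intro z
    obtain ⟨x, hx⟩ := (res.exact₀ z.val).mp z.2
    rw [← hx]
    have h1 : h (res.d 0 x) = g x := LinearMap.congr_fun (congrArg ModuleCat.Hom.hom hh) x
    rw [h1]
    exact Subtype.ext hx
  letI hP0 : Module.Projective R (res.P 0) := mod_of_projective _ (res.projective 0)
  have hKproj : Module.Projective R (LinearMap.ker res.π.hom) :=
    Module.Projective.of_split (LinearMap.ker res.π.hom).subtype (h.hom : res.P 0 →ₗ[R] K)
      (LinearMap.ext fun z => hret z)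
  refine ⟨fun j => match j with
    | 0 => A
    | 1 => res.P 0
    | _+2 => K,
    fun j => match j with
    | 0 => res.π
    | 1 => (ModuleCat.ofHom (LinearMap.ker res.π.hom).subtype : K ⟶ res.P 0)
    | _+2 => 0, ⟨Iso.refl A⟩, ?_, ?_, ?_, ?_⟩
  · rintro (_|_|j) h1 h2
    · omega
    · exact res.projective 0
    · match j, h2 with
      | 0, _ => exact projective_of_mod _ hKproj
  · exact fun a b hab => Subtype.ext hab
  · exact res.surj
  · rintro (_|i) hi
    · intro y
      constructor
      · intro hy
        exact ⟨⟨y, hy⟩, rfl⟩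
      · rintro ⟨z, rfl⟩
        exact z.2
    · omega

lemma pd_step {A F : ModuleCat.{v} R} (π : F ⟶ A) (hs : Function.Surjective π)
    (hF : Projective F) {k : ℕ} (hK : HasPdLE R (ModuleCat.of R (LinearMap.ker π.hom)) k) :
    HasPdLE R A (k+1) := by
  obtain ⟨X, d, ⟨e⟩, hproj, hinj, hsurj, hexact⟩ := hK
  have hbij : Function.Bijective (e.hom) := ConcreteCategory.bijective_of_isIso e.hom
  set dd : X 1 ⟶ F :=
    ModuleCat.ofHom ((LinearMap.ker π.hom).subtype.comp ((e.hom.hom : X 0 →ₗ[R] (ModuleCat.of R (LinearMap.ker π.hom))).comp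
      (((d 0).hom : X 1 →ₗ[R] X 0)))) with hdd
  refine ⟨fun j => match j with
    | 0 => A
    | 1 => F
    | (j+2) => X (j+1),
    fun j => match j with
    | 0 => π
    | 1 => dd
    | (j+2) => d (j+1), ⟨Iso.refl A⟩, ?_, ?_, ?_, ?_⟩
  · rintro (_|_|j) h1 h2
    · omega
    · exact hF
    · exact hproj (j+1) (by omega) (by omega)
  · -- injectivity of the top map
    match k with
    | 0 =>
      intro a b hab
      have h1 : e.hom ((d 0) a) = e.hom ((d 0) b) := Subtype.ext hab
      exact hinj (hbij.1 h1)
    | (k+1) => exact hinj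
  · exact hs
  · rintro (_|_|i) hi
    · -- exactness at F
      intro y
      constructor
      · intro hy
        obtain ⟨x, hx⟩ := hsurj (e.inv ⟨y, hy⟩)
        refine ⟨x, ?_⟩
        show (LinearMap.ker π.hom).subtype (e.hom ((d 0) x)) = y
        rw [hx]
        have h2 : e.hom (e.inv ⟨y, hy⟩) = ⟨y, hy⟩ :=
          congrArg (fun φ : (ModuleCat.of R (LinearMap.ker π.hom)) ⟶
            (ModuleCat.of R (LinearMap.ker π.hom)) => φ ⟨y, hy⟩) e.inv_hom_id
        rw [h2]
        rfl
      · rintro ⟨x, rfl⟩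
        exact (e.hom ((d 0) x)).2
    · -- exactness at X 1
      intro y
      constructor
      · intro hy
        have h1 : (d 0) y = 0 := by
          have h2 : e.hom ((d 0) y) = 0 := by
            refine Subtype.ext ?_
            exact hy
          have h3 : e.hom ((d 0) y) = e.hom 0 := by rw [h2, map_zero]
          exact hbij.1 h3
        exact (hexact 0 (by omega) y).mp h1
      · rintro ⟨x, rfl⟩
        show (LinearMap.ker π.hom).subtype (e.hom ((d 0) ((d 1) x))) = 0
        rw [(hexact 0 (by omega)).apply_apply_eq_zero x, map_zero]
        rfl
    · exact hexact (i+1) (by omega)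

lemma pd_of_ext_vanish : ∀ (p : ℕ) (A : ModuleCat.{v} R),
    (∀ Y : ModuleCat.{v} R, Subsingleton (extGroup R (p+1) A Y)) → ∃ k, HasPdLE R A k := by
  intro p
  induction p with
  | zero => exact fun A hv => ⟨1, pd_of_ext1 hv⟩
  | succ p ih =>
    intro A hv
    set K := ModuleCat.of R (LinearMap.ker (coverMap A).hom) with hKdef
    have hKv : ∀ Y : ModuleCat.{v} R, Subsingleton (extGroup R (p+1) K Y) := by
      intro Y
      refine (ext_subsingleton_iff (freeRes K) p).mpr ?_
      have hmp := (ext_subsingleton_iff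
        (augRes (coverMap A) (coverMap_surjective A) (cover_projective A) (freeRes K))
        (p+1)).mp (hv Y)
      intro g hg
      exact hmp g hg
    obtain ⟨k, hk⟩ := ih K hKv
    exact ⟨k+1, pd_step (coverMap A) (coverMap_surjective A) (cover_projective A) hk⟩

end SGAux

namespace SGAux
open CategoryTheory

universe v
variable {R : Type v} [Ring R]

def trivSub (Q : ModuleCat.{v} R) (n : ℕ) : ℕ → Submodule R (↑Q × ↑Q) := fun j =>
  if 1 ≤ j ∧ j ≤ n then ⊤ else Submodule.prod ⊤ ⊥

noncomputable def trivMap (Q : ModuleCat.{v} R) (n : ℕ) (j : ℕ) : (↑Q × ↑Q) →ₗ[R] (↑Q × ↑Q) :=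
  if j = n then LinearMap.id else LinearMap.prod (LinearMap.snd R ↑Q ↑Q) 0

lemma trivSub_top (Q : ModuleCat.{v} R) {n j : ℕ} (h1 : 1 ≤ j) (h2 : j ≤ n) :
    trivSub Q n j = ⊤ := if_pos ⟨h1, h2⟩

lemma trivSub_bot (Q : ModuleCat.{v} R) {n j : ℕ} (h : ¬ (1 ≤ j ∧ j ≤ n)) :
    trivSub Q n j = Submodule.prod ⊤ ⊥ := if_neg h

lemma trivMap_id (Q : ModuleCat.{v} R) {n : ℕ} : trivMap Q n n = LinearMap.id := if_pos rfl

lemma trivMap_e (Q : ModuleCat.{v} R) {n j : ℕ} (h : j ≠ n) :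
    trivMap Q n j = LinearMap.prod (LinearMap.snd R ↑Q ↑Q) 0 := if_neg h

lemma trivMapsTo (Q : ModuleCat.{v} R) {n : ℕ} (hn : 1 ≤ n) (j : ℕ) :
    ∀ x ∈ trivSub Q n (j+1), trivMap Q n j x ∈ trivSub Q n j := by
  intro x _
  by_cases hj : j = n
  · subst hj
    rw [trivSub_top Q hn le_rfl]
    trivial
  · rw [trivMap_e Q hj]
    by_cases hj2 : 1 ≤ j ∧ j ≤ n
    · rw [trivSub_top Q hj2.1 hj2.2]
      trivial
    · rw [trivSub_bot Q hj2]
      refine Submodule.mem_prod.mpr ⟨trivial, ?_⟩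
      simp [LinearMap.prod_apply]

noncomputable def trivD (Q : ModuleCat.{v} R) {n : ℕ} (hn : 1 ≤ n) (j : ℕ) :
    (trivSub Q n (j+1)) →ₗ[R] (trivSub Q n j) :=
  (trivMap Q n j).restrict (trivMapsTo Q hn j)

/-- the equivalence `(⊤ × ⊥ : Submodule (Q × Q)) ≃ₗ Q`. -/
def fstEquiv (Q : ModuleCat.{v} R) :
    (Submodule.prod (⊤ : Submodule R Q) (⊥ : Submodule R Q)) ≃ₗ[R] Q where
  toFun p := p.val.1
  map_add' _ _ := rfl
  map_smul' _ _ := rfl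
  invFun q := ⟨(q, 0), Submodule.mem_prod.mpr ⟨trivial, Submodule.zero_mem ⊥⟩⟩
  left_inv p := Subtype.ext (Prod.ext_iff.mpr
    ⟨rfl, (((Submodule.mem_bot R).mp (Submodule.mem_prod.mp p.2).2)).symm⟩)
  right_inv q := rfl

end SGAux

namespace SGAux
open CategoryTheory

universe v
variable {R : Type v} [Ring R]

lemma toLinearEquiv_of_iso {A B : ModuleCat.{v} R} (e : A ≅ B) : Nonempty (A ≃ₗ[R] B) :=
  ⟨LinearEquiv.ofBijective e.hom.hom (ConcreteCategory.bijective_of_isIso e.hom)⟩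

lemma trivD_val (Q : ModuleCat.{v} R) {n : ℕ} (hn : 1 ≤ n) (j : ℕ)
    (x : trivSub Q n (j+1)) : (trivD Q hn j x).val = trivMap Q n j x.val := rfl

lemma trivD_inj (Q : ModuleCat.{v} R) {n : ℕ} (hn : 1 ≤ n) :
    Function.Injective (trivD Q hn n) := by
  intro a b hab
  have h1 : trivMap Q n n a.val = trivMap Q n n b.val := by
    have := congrArg Subtype.val hab
    rwa [trivD_val, trivD_val] at this
  rw [trivMap_id] at h1
  exact Subtype.ext h1

lemma trivD_surj (Q : ModuleCat.{v} R) {n : ℕ} (hn : 1 ≤ n) :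
    Function.Surjective (trivD Q hn 0) := by
  rintro ⟨y, hy⟩
  rw [trivSub_bot Q (by omega)] at hy
  have hy2 : y.2 = 0 := (Submodule.mem_bot R).mp (Submodule.mem_prod.mp hy).2
  refine ⟨⟨(0, y.1), by rw [trivSub_top Q le_rfl hn]; trivial⟩, ?_⟩
  refine Subtype.ext ?_
  rw [trivD_val]
  show trivMap Q n 0 (0, y.1) = y
  rw [trivMap_e Q (by omega)]
  refine Prod.ext_iff.mpr ⟨rfl, hy2.symm⟩

lemma trivD_exact (Q : ModuleCat.{v} R) {n : ℕ} (hn : 1 ≤ n) {i : ℕ} (hi : i < n) :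
    Function.Exact (trivD Q hn (i+1)) (trivD Q hn i) := by
  intro y
  have hyval : (trivD Q hn i y).val = trivMap Q n i y.val := trivD_val Q hn i y
  have hfi : trivMap Q n i = LinearMap.prod (LinearMap.snd R ↑Q ↑Q) 0 :=
    trivMap_e Q (by omega)
  have hlhs : trivD Q hn i y = 0 ↔ (y.val).2 = 0 := by
    rw [← Subtype.coe_inj, hyval, hfi]
    show ((y.val).2, (0 : ↑Q)) = (0 : ↑Q × ↑Q) ↔ _
    rw [Prod.ext_iff]
    exact ⟨fun h => h.1, fun h => ⟨h, rfl⟩⟩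
  rw [hlhs]
  constructor
  · intro hy2
    by_cases hc : i + 1 = n
    · refine ⟨⟨y.val, ?_⟩, ?_⟩
      · rw [trivSub_bot Q (by omega)]
        exact Submodule.mem_prod.mpr ⟨trivial, (Submodule.mem_bot R).mpr hy2⟩
      · refine Subtype.ext ?_
        rw [trivD_val]
        show trivMap Q n (i+1) y.val = y.val
        rw [show trivMap Q n (i+1) = LinearMap.id from by rw [hc]; exact trivMap_id Q]
        rfl
    · refine ⟨⟨(0, (y.val).1), ?_⟩, ?_⟩
      · rw [trivSub_top Q (by omega) (by omega)]
        trivial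
      · refine Subtype.ext ?_
        rw [trivD_val]
        show trivMap Q n (i+1) (0, (y.val).1) = y.val
        rw [trivMap_e Q hc]
        exact Prod.ext_iff.mpr ⟨rfl, hy2.symm⟩
  · rintro ⟨x, rfl⟩
    show ((trivD Q hn (i+1) x).val).2 = 0
    rw [trivD_val]
    by_cases hc : i + 1 = n
    · have hsub : trivSub Q n (i+1+1) = Submodule.prod ⊤ ⊥ := trivSub_bot Q (by omega)
      have hx : x.val ∈ Submodule.prod (⊤ : Submodule R ↑Q) ⊥ := by
        rw [← hsub]
        exact x.2
      have hx2 : (x.val).2 = 0 := (Submodule.mem_bot R).mp (Submodule.mem_prod.mp hx).2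
      show (trivMap Q n (i+1) x.val).2 = 0
      rw [show trivMap Q n (i+1) = LinearMap.id from by rw [hc]; exact trivMap_id Q]
      exact hx2
    · show (trivMap Q n (i+1) x.val).2 = 0
      rw [trivMap_e Q hc]
      rfl

/-- the exact-sequence part of the theorem. -/
lemma seq_part {n m : ℕ} (hn : 1 ≤ n) {M Q : ModuleCat.{v} R}
    {X : ℕ → ModuleCat.{v} R} {d : ∀ i, X (i + 1) ⟶ X i}
    (e0 : X 0 ≅ M) (en1 : X (n+1) ≅ M) (hpd : ∀ i, 1 ≤ i → i ≤ n → HasPdLE R (X i) 0)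
    (hex : IsExactSeq R d n) (hQ : HasPdLE R Q m) :
    ∃ (Z : ℕ → ModuleCat.{v} R) (dz : ∀ i, Z (i + 1) ⟶ Z i),
      Nonempty (Z 0 ≅ ModuleCat.of R (M × Q)) ∧
      Nonempty (Z (n + 1) ≅ ModuleCat.of R (M × Q)) ∧
      (∀ i, 1 ≤ i → i ≤ n → HasPdLE R (Z i) m) ∧ IsExactSeq R dz n := by
  obtain ⟨hinj, hsurj, hexact⟩ := hex
  refine ⟨fun j => ModuleCat.of R (X j × (trivSub Q n j)),
    fun j => (ModuleCat.ofHom (LinearMap.prodMap (d j).hom (trivD Q hn j)) :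
      ModuleCat.of R (X (j+1) × (trivSub Q n (j+1))) ⟶ _), ?_, ?_, ?_, ?_, ?_, ?_⟩
  · -- iso at 0
    obtain ⟨eM⟩ := toLinearEquiv_of_iso e0
    exact ⟨(eM.prodCongr (((LinearEquiv.ofEq _ _ (trivSub_bot Q (by omega))).trans
      (fstEquiv Q)))).toModuleIso⟩
  · -- iso at n+1
    obtain ⟨eM⟩ := toLinearEquiv_of_iso en1
    exact ⟨(eM.prodCongr (((LinearEquiv.ofEq _ _ (trivSub_bot Q (by omega))).trans
      (fstEquiv Q)))).toModuleIso⟩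
  · -- pd of middles
    intro i h1 h2
    have hXp : Projective (X i) := projective_of_pd0 (hpd i h1 h2)
    have hQQ : HasPdLE R (ModuleCat.of R (Q × Q)) m := pd_prod hQ hQ
    have hXQ : HasPdLE R (ModuleCat.of R (X i × (↑Q × ↑Q))) m :=
      pd_prod (pd_of_projective hXp m) hQQ
    refine pd_iso ?_ hXQ
    exact ((LinearEquiv.refl R (X i)).prodCongr
      (((LinearEquiv.ofEq _ _ (trivSub_top Q h1 h2)).trans
        (Submodule.topEquiv)))).toModuleIso.symm
  · exact inj_prodMap hinj (trivD_inj Q hn)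
  · exact surj_prodMap hsurj (trivD_surj Q hn)
  · exact fun i hi => exact_prodMap (hexact i hi) (trivD_exact Q hn hi)

end SGAux

/-- if `M` is `(n,0)`-SG-projective and not projective and `pd Q ≤ m`, then
`M ⊕ Q` is `(n,m)`-SG-projective; moreover if `pd M = ∞` then `pd (M ⊕ Q) = ∞`. -/
theorem sum_sgProjective {R : Type u} [Ring R] (n m : ℕ) (hn : 1 ≤ n)
    (M Q : ModuleCat.{u} R) (hM : IsSGProjective R n 0 M) (hMnp : ¬ Projective M)
    (hQ : HasPdLE R Q m) :
    IsSGProjective R n m (ModuleCat.of R (M × Q)) ∧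
      ((¬ ∃ p, HasPdLE R M p) → ¬ ∃ p, HasPdLE R (ModuleCat.of R (M × Q)) p) := by
  obtain ⟨⟨X, d, ⟨e0⟩, ⟨en1⟩, hpd, hex⟩, hext⟩ := hM
  constructor
  · constructor
    · exact SGAux.seq_part hn e0 en1 hpd hex hQ
    · rintro (_|i) hi Y hYproj
      · omega
      · exact SGAux.ext_prod_vanish (hext (i+1) (by omega) Y hYproj)
          (SGAux.ext_vanish_of_pd hQ (i+1) (by omega) Y)
  · rintro hMinf ⟨p, hp⟩
    refine hMinf (SGAux.pd_of_ext_vanish p M ?_)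
    intro Y
    exact SGAux.ext_summand (B := Q) (SGAux.ext_vanish_of_pd hp (p+1) (by omega) Y)
end
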